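/- Suppose forests F and G satisfy that running the piece-decomposition matching process on str(F) with threshold k produces a complete matching (every parenthesis of F is in a removed piece that is either small, of size at most 4k, or exactly matched in str(G) up to an index shift of at most k). Then ted(F,G) = O(k^2 log |F|): the matched pieces, truncated by 2k characters at each end, together with deletions for all unmatched positions, form a valid tree alignment of cost O(k^2 log |F|). -/

import Mathlib

/-- Rooted ordered labeled trees. -/
inductive LTree (α : Type) : Type where
  | node : α → List (LTree α) → LTree α

mutual
  /-- Number of nodes of a labeled tree. -/
  def tsize {α : Type} : LTree α → ℕ
    | .node _ ts => 1 + fsize ts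
  /-- Number of nodes of a labeled forest. -/
  def fsize {α : Type} : List (LTree α) → ℕ
    | [] => 0
    | t :: ts => tsize t + fsize ts
end

mutual
  /-- Parenthesis representation of a tree: `(_a · str(children) · )_a`. -/
  def pstr {α : Type} : LTree α → List (Bool × α)
    | .node a ts => (true, a) :: (pforest ts ++ [(false, a)])
  /-- Parenthesis representation of a forest. -/
  def pforest {α : Type} : List (LTree α) → List (Bool × α)
    | [] => []
    | t :: ts => pstr t ++ pforest ts
end

mutual
  /-- The pair `(o(u), c(u))` of positions, in the parenthesis representation,
  of the node `u` of a tree addressed by a list of child indices. -/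
  def tpos {α : Type} : LTree α → List ℕ → Option (ℕ × ℕ)
    | t, [] => some (0, (pstr t).length - 1)
    | .node _ ts, k :: addr => (fpos ts (k :: addr)).map (fun p => (p.1 + 1, p.2 + 1))
  /-- The pair `(o(u), c(u))` of positions of the node of a forest addressed by a
  nonempty list of child indices (the first index selects the tree). -/
  def fpos {α : Type} : List (LTree α) → List ℕ → Option (ℕ × ℕ)
    | [], _ => none
    | _ :: _, [] => none
    | t :: _, 0 :: addr => tpos t addr
    | t :: ts, (k + 1) :: addr =>
        (fpos ts (k :: addr)).map (fun p => (p.1 + (pstr t).length, p.2 + (pstr t).length))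
end

mutual
  /-- The subtree of a tree at a given address. -/
  def tSub {α : Type} : LTree α → List ℕ → Option (LTree α)
    | t, [] => some t
    | .node _ ts, k :: addr => fSub ts (k :: addr)
  /-- The subtree of a forest at a given (nonempty) address. -/
  def fSub {α : Type} : List (LTree α) → List ℕ → Option (LTree α)
    | [], _ => none
    | _ :: _, [] => none
    | t :: _, 0 :: addr => tSub t addr
    | _ :: ts, (k + 1) :: addr => fSub ts (k :: addr)
end

/-- One node edit on a forest: relabel a node, delete a node (splicing its children
into its place), or insert a node (gathering a contiguous run of siblings as its
children); edits may occur at any depth. -/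
inductive FStep {α : Type} : List (LTree α) → List (LTree α) → Prop where
  | relabel (pre post ts : List (LTree α)) (a b : α) :
      FStep (pre ++ LTree.node a ts :: post) (pre ++ LTree.node b ts :: post)
  | delete (pre post ts : List (LTree α)) (a : α) :
      FStep (pre ++ LTree.node a ts :: post) (pre ++ ts ++ post)
  | insert (pre mid post : List (LTree α)) (a : α) :
      FStep (pre ++ mid ++ post) (pre ++ LTree.node a mid :: post)
  | congr (pre post ts ts' : List (LTree α)) (a : α) :
      FStep ts ts' → FStep (pre ++ LTree.node a ts :: post) (pre ++ LTree.node a ts' :: post)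

/-- `FEdits n F G` : `G` can be obtained from `F` by `n` node edits. -/
inductive FEdits {α : Type} : ℕ → List (LTree α) → List (LTree α) → Prop where
  | refl (F : List (LTree α)) : FEdits 0 F F
  | step {n : ℕ} {F G H : List (LTree α)} :
      FStep F G → FEdits n G H → FEdits (n + 1) F H

/-- Tree edit distance: minimum number of node insertions, deletions, and label
substitutions transforming forest `F` into forest `G`. -/
noncomputable def ted {α : Type} (F G : List (LTree α)) : ℕ :=
  sInf {n | FEdits n F G}

/-- A monotone matching: a list of index pairs strictly increasing in both
coordinates. -/
def IsMatching (M : List (ℕ × ℕ)) : Prop :=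
  M.Chain' (fun p q => p.1 < q.1 ∧ p.2 < q.2)

/-- All pairs of the matching are within the bounds of the two strings. -/
def InBounds {β : Type} (s t : List β) (M : List (ℕ × ℕ)) : Prop :=
  ∀ p ∈ M, p.1 < s.length ∧ p.2 < t.length

/-- The cost of the alignment represented by the monotone matching `M` of `s` and
`t` : deletions in `s`, plus deletions in `t`, plus substitutions (aligned pairs of
distinct characters). -/
def alignCost {β : Type} [DecidableEq β] (s t : List β) (d : β) (M : List (ℕ × ℕ)) : ℕ :=
  (s.length - M.length) + (t.length - M.length) +
    M.countP (fun p => decide (s.getD p.1 d ≠ t.getD p.2 d))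

/-- A tree alignment of forests `F` and `G` : an alignment (monotone matching) of
their parenthesis representations such that, for each node `u` of `F`, either both
parentheses of `u` are deleted, or there is a node `v` of `G` whose opening and
closing parentheses are aligned with those of `u`. -/
def TreeAligned {α : Type} (F G : List (LTree α)) (M : List (ℕ × ℕ)) : Prop :=
  IsMatching M ∧ InBounds (pforest F) (pforest G) M ∧
    ∀ a ou cu, fpos F a = some (ou, cu) →
      ((∀ q ∈ M, q.1 ≠ ou ∧ q.1 ≠ cu) ∨
        ∃ b ov cv, fpos G b = some (ov, cv) ∧ (ou, ov) ∈ M ∧ (cu, cv) ∈ M)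

/-- The substring `s[i..j)`. -/
def seg {γ : Type} (s : List γ) (i j : ℕ) : List γ := (s.take j).drop i

/-- A piece of the parenthesis representation of a forest: either a subforest
`str(F)[i..j)` (a balanced substring) or a context
`(str(F)[i₁..j₁), str(F)[i₂..j₂))`. -/
inductive Piece : Type where
  | fpiece (i j : ℕ)
  | cpiece (i₁ j₁ i₂ j₂ : ℕ)

/-- Validity of a piece of `str(F)` : a subforest piece is a balanced substring
(the representation of some forest); a context piece satisfies
`i₁ < j₁ < i₂ < j₂`, with `str(F)[i₁..j₂)` the representation of a tree and
`str(F)[j₁..i₂)` the representation of a forest. -/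
def ValidPiece {α : Type} (F : List (LTree α)) : Piece → Prop
  | .fpiece i j => i ≤ j ∧ j ≤ (pforest F).length ∧
      ∃ ts : List (LTree α), seg (pforest F) i j = pforest ts
  | .cpiece i₁ j₁ i₂ j₂ => i₁ < j₁ ∧ j₁ < i₂ ∧ i₂ < j₂ ∧ j₂ ≤ (pforest F).length ∧
      (∃ t : LTree α, seg (pforest F) i₁ j₂ = pstr t) ∧
      (∃ ts : List (LTree α), seg (pforest F) j₁ i₂ = pforest ts)

/-- The set of positions covered by a piece. -/
def Covers : Piece → ℕ → Prop
  | .fpiece i j, p => i ≤ p ∧ p < j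
  | .cpiece i₁ j₁ i₂ j₂, p => (i₁ ≤ p ∧ p < j₁) ∨ (i₂ ≤ p ∧ p < j₂)

/-- The size of a piece. -/
def psize : Piece → ℕ
  | .fpiece i j => j - i
  | .cpiece i₁ j₁ i₂ j₂ => (j₁ - i₁) + (j₂ - i₂)

/-- `a` and `b` differ by at most `k`. -/
def Near (k a b : ℕ) : Prop := a ≤ b + k ∧ b ≤ a + k

/-- A piece of `str(F)` has an exact match in `str(G)` whose starting position(s)
are shifted by at most `k`; for contexts, the two matched parts must again form a
valid context of `G`. -/
def MatchedPiece {α : Type} (F G : List (LTree α)) (k : ℕ) : Piece → Prop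
  | .fpiece i j => ∃ i', Near k i i' ∧ i' + (j - i) ≤ (pforest G).length ∧
      seg (pforest F) i j = seg (pforest G) i' (i' + (j - i))
  | .cpiece i₁ j₁ i₂ j₂ => ∃ i₁' i₂',
      Near k i₁ i₁' ∧ Near k i₂ i₂' ∧
      i₁' + (j₁ - i₁) < i₂' ∧ i₂' + (j₂ - i₂) ≤ (pforest G).length ∧
      seg (pforest F) i₁ j₁ = seg (pforest G) i₁' (i₁' + (j₁ - i₁)) ∧
      seg (pforest F) i₂ j₂ = seg (pforest G) i₂' (i₂' + (j₂ - i₂)) ∧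
      (∃ t : LTree α, seg (pforest G) i₁' (i₂' + (j₂ - i₂)) = pstr t) ∧
      (∃ ts : List (LTree α),
        seg (pforest G) (i₁' + (j₁ - i₁)) i₂' = pforest ts)

section Dev
variable {α : Type}

/-- Balance of a parenthesis string. -/
def bal (s : List (Bool × α)) : ℤ := (s.map fun ch => if ch.1 then (1:ℤ) else -1).sum

@[simp] theorem bal_nil : bal ([] : List (Bool × α)) = 0 := rfl

@[simp] theorem bal_append (s t : List (Bool × α)) : bal (s ++ t) = bal s + bal t := by
  simp [bal]

@[simp] theorem bal_cons (ch : Bool × α) (s : List (Bool × α)) :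
    bal (ch :: s) = (if ch.1 then (1:ℤ) else -1) + bal s := by
  simp [bal]

mutual
theorem len_pstr (t : LTree α) : (pstr t).length = 2 * tsize t := by
  cases t with
  | node a ts => simp [pstr, tsize, len_pforest ts]; ring
theorem len_pforest (ts : List (LTree α)) : (pforest ts).length = 2 * fsize ts := by
  cases ts with
  | nil => rfl
  | cons t ts => simp [pforest, fsize, len_pstr t, len_pforest ts]; ring
end

mutual
theorem bal_pstr (t : LTree α) : bal (pstr t) = 0 := by
  cases t with
  | node a ts => simp [pstr, bal_pforest ts]
theorem bal_pforest (ts : List (LTree α)) : bal (pforest ts) = 0 := by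
  cases ts with
  | nil => rfl
  | cons t ts => simp [pforest, bal_pstr t, bal_pforest ts]
end

/-- Nonnegative prefixes. -/
def nneg (s : List (Bool × α)) : Prop := ∀ m, 0 ≤ bal (s.take m)

mutual
theorem nneg_pstr (t : LTree α) (m : ℕ) (hm : m < (pstr t).length) (h0 : 0 < m) :
    1 ≤ bal ((pstr t).take m) := by
  cases t with
  | node a ts =>
    match m, h0 with
    | m + 1, _ =>
      have hm' : m ≤ (pforest ts).length := by
        simp [pstr] at hm; omega
      simp only [pstr, List.take_succ_cons, bal_cons]
      rw [List.take_append_of_le_length hm']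
      have := nneg_pforest ts m
      simp; omega
theorem nneg_pforest (ts : List (LTree α)) (m : ℕ) : 0 ≤ bal ((pforest ts).take m) := by
  cases ts with
  | nil => simp [pforest]
  | cons t ts =>
    simp only [pforest]
    rcases lt_or_ge m (pstr t).length with h | h
    · rw [List.take_append_of_le_length (le_of_lt h)]
      rcases Nat.eq_zero_or_pos m with h0 | h0
      · simp [h0]
      · have := nneg_pstr t m h h0; omega
    · rw [List.take_append]
      have h1 : (pstr t).take m = pstr t := List.take_of_length_le h
      rw [h1]
      simp [bal_pstr t]
      exact nneg_pforest ts (m - (pstr t).length)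
end

theorem nneg_pforest' (ts : List (LTree α)) : nneg (pforest ts) := fun m => nneg_pforest ts m

end Dev
section Dev2
variable {α : Type} {γ : Type}

theorem seg_length (s : List γ) (i j : ℕ) : (seg s i j).length = min j s.length - i := by
  simp [seg]

theorem seg_append_seg (s : List γ) {i j l : ℕ} (hij : i ≤ j) (hjl : j ≤ l) :
    seg s i j ++ seg s j l = seg s i l := by
  unfold seg
  have h1 : s.take j = (s.take l).take j := by rw [List.take_take, min_eq_left hjl]
  rw [h1]
  rw [show (s.take l).drop j = ((s.take l).drop i).drop (j - i) by rw [List.drop_drop]; congr 1; omega]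
  rw [show ((s.take l).take j).drop i = ((s.take l).drop i).take (j - i) by rw [List.drop_take]]
  exact List.take_append_drop _ _

theorem seg_cons (ch : γ) (s : List γ) (i j : ℕ) :
    seg (ch :: s) (i+1) (j+1) = seg s i j := by
  simp [seg]

theorem seg_append_left (X Y : List γ) {i j : ℕ} (h : j ≤ X.length) :
    seg (X ++ Y) i j = seg X i j := by
  simp [seg, List.take_append_of_le_length h]

theorem seg_append_shift (X Y : List γ) (i j : ℕ) :
    seg (X ++ Y) (X.length + i) (X.length + j) = seg Y i j := by
  simp [seg, List.take_append, List.drop_append]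

theorem seg_getElem? (s : List γ) {i j m : ℕ} (h : i + m < j) :
    (seg s i j)[m]? = (s.take j)[i + m]? := by
  simp [seg, List.getElem?_drop]

theorem seg_get_eq (s : List γ) {i j m : ℕ} (h : i + m < j) (hj : j ≤ s.length) :
    (seg s i j)[m]? = s[i + m]? := by
  rw [seg_getElem? s h]
  rw [List.getElem?_take]
  simp [h]

end Dev2
section Dev3
variable {α : Type} {γ : Type}

theorem get?_app_lt {l1 l2 : List γ} {n : ℕ} (h : n < l1.length) : (l1 ++ l2)[n]? = l1[n]? := by
  rw [List.getElem?_append]; rw [if_pos h]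

theorem get?_app_ge {l1 l2 : List γ} {n : ℕ} (h : l1.length ≤ n) :
    (l1 ++ l2)[n]? = l2[n - l1.length]? := by
  rw [List.getElem?_append]; rw [if_neg (by omega)]

mutual
/-- The `(open, close)` position pairs of all nodes of a tree. -/
def tnodes : LTree α → List (ℕ × ℕ)
  | .node _ ts => (0, (pforest ts).length + 1) :: (fnodes ts).map (fun q => (q.1 + 1, q.2 + 1))
/-- The `(open, close)` position pairs of all nodes of a forest. -/
def fnodes : List (LTree α) → List (ℕ × ℕ)
  | [] => []
  | t :: ts => tnodes t ++ (fnodes ts).map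
      (fun q => (q.1 + (pstr t).length, q.2 + (pstr t).length))
end

theorem pstr_eq (a : α) (ts : List (LTree α)) :
    pstr (LTree.node a ts) = (true, a) :: (pforest ts ++ [(false, a)]) := by
  simp [pstr]

mutual
theorem tnodes_bounds (t : LTree α) : ∀ q ∈ tnodes t, q.1 < q.2 ∧ q.2 < (pstr t).length := by
  cases t with
  | node a ts =>
    intro q hq
    simp only [tnodes, List.mem_cons, List.mem_map] at hq
    rcases hq with h | ⟨p, hp, h⟩
    · subst h; simp [pstr_eq]
    · have := fnodes_bounds ts p hp
      subst h; simp [pstr_eq]; omega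
theorem fnodes_bounds (ts : List (LTree α)) :
    ∀ q ∈ fnodes ts, q.1 < q.2 ∧ q.2 < (pforest ts).length := by
  cases ts with
  | nil => intro q hq; simp [fnodes] at hq
  | cons t ts =>
    intro q hq
    simp only [fnodes, List.mem_append, List.mem_map] at hq
    rcases hq with h | ⟨p, hp, h⟩
    · have := tnodes_bounds t q h
      simp [pforest]; omega
    · have := fnodes_bounds ts p hp
      subst h; simp [pforest]; omega
end

mutual
theorem tnodes_char (t : LTree α) : ∀ q ∈ tnodes t,
    ∃ a, (pstr t)[q.1]? = some (true, a) ∧ (pstr t)[q.2]? = some (false, a) := by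
  cases t with
  | node a ts =>
    intro q hq
    simp only [tnodes, List.mem_cons, List.mem_map] at hq
    rcases hq with h | ⟨p, hp, h⟩
    · subst h
      refine ⟨a, by simp [pstr_eq], ?_⟩
      simp only [pstr_eq]
      rw [List.getElem?_cons_succ, get?_app_ge (by simp)]
      simp
    · obtain ⟨b, h1, h2⟩ := fnodes_char ts p hp
      have hb := fnodes_bounds ts p hp
      subst h
      refine ⟨b, ?_, ?_⟩ <;> simp only [pstr_eq, List.getElem?_cons_succ]
      · rw [get?_app_lt (by omega)]; exact h1
      · rw [get?_app_lt (by omega)]; exact h2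
theorem fnodes_char (ts : List (LTree α)) : ∀ q ∈ fnodes ts,
    ∃ a, (pforest ts)[q.1]? = some (true, a) ∧ (pforest ts)[q.2]? = some (false, a) := by
  cases ts with
  | nil => intro q hq; simp [fnodes] at hq
  | cons t ts =>
    intro q hq
    simp only [fnodes, List.mem_append, List.mem_map] at hq
    rcases hq with h | ⟨p, hp, h⟩
    · obtain ⟨b, h1, h2⟩ := tnodes_char t q h
      have hb := tnodes_bounds t q h
      refine ⟨b, ?_, ?_⟩ <;> simp only [pforest]
      · rw [get?_app_lt (by omega)]; exact h1
      · rw [get?_app_lt (by omega)]; exact h2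
    · obtain ⟨b, h1, h2⟩ := fnodes_char ts p hp
      subst h
      refine ⟨b, ?_, ?_⟩ <;> simp only [pforest]
      · rw [get?_app_ge (by omega)]
        simpa using h1
      · rw [get?_app_ge (by omega)]
        simpa using h2
end

mutual
theorem tnodes_interior (t : LTree α) : ∀ q ∈ tnodes t,
    ∃ cs : List (LTree α), seg (pstr t) (q.1 + 1) q.2 = pforest cs := by
  cases t with
  | node a ts =>
    intro q hq
    simp only [tnodes, List.mem_cons, List.mem_map] at hq
    rcases hq with h | ⟨p, hp, h⟩
    · subst h
      refine ⟨ts, ?_⟩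
      rw [pstr_eq]
      rw [show ((true,a) :: (pforest ts ++ [(false,a)])) = ((true,a) :: pforest ts) ++ [(false,a)] by simp]
      rw [seg_append_left _ _ (by simp)]
      have := seg_cons (true, a) (pforest ts) 0 (pforest ts).length
      simpa [seg] using this
    · obtain ⟨cs, hcs⟩ := fnodes_interior ts p hp
      have hb := fnodes_bounds ts p hp
      subst h
      refine ⟨cs, ?_⟩
      rw [pstr_eq]
      rw [show (p.1 + 1 + 1) = (p.1 + 1) + 1 by rfl, seg_cons,
          seg_append_left _ _ (by omega)]
      exact hcs
theorem fnodes_interior (ts : List (LTree α)) : ∀ q ∈ fnodes ts,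
    ∃ cs : List (LTree α), seg (pforest ts) (q.1 + 1) q.2 = pforest cs := by
  cases ts with
  | nil => intro q hq; simp [fnodes] at hq
  | cons t ts =>
    intro q hq
    simp only [fnodes, List.mem_append, List.mem_map] at hq
    rcases hq with h | ⟨p, hp, h⟩
    · obtain ⟨cs, hcs⟩ := tnodes_interior t q h
      have hb := tnodes_bounds t q h
      refine ⟨cs, ?_⟩
      rw [pforest]
      rw [seg_append_left _ _ (by omega)]
      exact hcs
    · obtain ⟨cs, hcs⟩ := fnodes_interior ts p hp
      refine ⟨cs, ?_⟩
      subst h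
      rw [pforest]
      simp only []
      rw [show p.1 + (pstr t).length + 1 = (pstr t).length + (p.1 + 1) by omega,
          show p.2 + (pstr t).length = (pstr t).length + p.2 by omega]
      rw [seg_append_shift]
      exact hcs
end

mutual
theorem tnodes_cover (t : LTree α) : ∀ p < (pstr t).length, ∃ q ∈ tnodes t, p = q.1 ∨ p = q.2 := by
  cases t with
  | node a ts =>
    intro p hp
    have hl : (pstr (LTree.node a ts)).length = (pforest ts).length + 2 := by
      simp [pstr_eq]
    rcases Nat.eq_zero_or_pos p with h0 | h0
    · exact ⟨(0, (pforest ts).length + 1), by simp [tnodes], Or.inl h0⟩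
    rcases eq_or_lt_of_le (show p + 1 ≤ (pforest ts).length + 2 by omega) with hlast | hmid
    · refine ⟨(0, (pforest ts).length + 1), by simp [tnodes], Or.inr ?_⟩
      omega
    · have hp' : p - 1 < (pforest ts).length := by omega
      obtain ⟨q, hq, hor⟩ := fnodes_cover ts (p - 1) hp'
      refine ⟨(q.1 + 1, q.2 + 1), ?_, ?_⟩
      · simp only [tnodes, List.mem_cons, List.mem_map]
        exact Or.inr ⟨q, hq, rfl⟩
      · rcases hor with h | h <;> [left; right] <;> omega
theorem fnodes_cover (ts : List (LTree α)) :
    ∀ p < (pforest ts).length, ∃ q ∈ fnodes ts, p = q.1 ∨ p = q.2 := by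
  cases ts with
  | nil => intro p hp; simp [pforest] at hp
  | cons t ts =>
    intro p hp
    rcases lt_or_ge p (pstr t).length with h | h
    · obtain ⟨q, hq, hor⟩ := tnodes_cover t p h
      exact ⟨q, by simp [fnodes, hq], hor⟩
    · have hp' : p - (pstr t).length < (pforest ts).length := by
        simp [pforest] at hp; omega
      obtain ⟨q, hq, hor⟩ := fnodes_cover ts (p - (pstr t).length) hp'
      refine ⟨(q.1 + (pstr t).length, q.2 + (pstr t).length), ?_, ?_⟩
      · simp only [fnodes, List.mem_append, List.mem_map]
        exact Or.inr ⟨q, hq, rfl⟩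
      · rcases hor with hh | hh <;> [left; right] <;> omega
end

end Dev3
section Dev4
variable {α : Type} {γ : Type}

mutual
theorem tpos_mem (t : LTree α) : ∀ addr q, tpos t addr = some q → q ∈ tnodes t := by
  cases t with
  | node a ts =>
    intro addr q h
    cases addr with
    | nil =>
      simp [tpos] at h
      have : (pstr (LTree.node a ts)).length - 1 = (pforest ts).length + 1 := by
        simp [pstr_eq]
      rw [this] at h
      simp [tnodes, ← h]
    | cons kk addr =>
      simp only [tpos, Option.map_eq_some_iff] at h
      obtain ⟨p, hp, hq⟩ := h
      have := fpos_mem ts (kk :: addr) p hp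
      simp only [tnodes, List.mem_cons, List.mem_map]
      exact Or.inr ⟨p, this, by rw [← hq]⟩
theorem fpos_mem (ts : List (LTree α)) : ∀ addr q, fpos ts addr = some q → q ∈ fnodes ts := by
  cases ts with
  | nil => intro addr q h; simp [fpos] at h
  | cons t ts =>
    intro addr q h
    match addr with
    | [] => simp [fpos] at h
    | 0 :: addr =>
      have := tpos_mem t addr q (by simpa [fpos] using h)
      simp [fnodes, this]
    | (kk+1) :: addr =>
      simp only [fpos, Option.map_eq_some_iff] at h
      obtain ⟨p, hp, hq⟩ := h
      have := fpos_mem ts (kk :: addr) p hp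
      simp only [fnodes, List.mem_append, List.mem_map]
      exact Or.inr ⟨p, this, by rw [← hq]⟩
end

theorem fpos_nil_none (ts : List (LTree α)) : fpos ts [] = none := by
  cases ts <;> simp [fpos]

mutual
theorem tnodes_pos (t : LTree α) : ∀ q ∈ tnodes t, ∃ addr, tpos t addr = some q := by
  cases t with
  | node a ts =>
    intro q hq
    simp only [tnodes, List.mem_cons, List.mem_map] at hq
    rcases hq with h | ⟨p, hp, h⟩
    · refine ⟨[], ?_⟩
      have : (pstr (LTree.node a ts)).length - 1 = (pforest ts).length + 1 := by
        simp [pstr_eq]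
      simp [tpos, this, h]
    · obtain ⟨addr, haddr⟩ := fnodes_pos ts p hp
      match addr, haddr with
      | [], haddr => rw [fpos_nil_none] at haddr; simp at haddr
      | kk :: addr, haddr =>
        refine ⟨kk :: addr, ?_⟩
        simp [tpos, haddr, ← h]
theorem fnodes_pos (ts : List (LTree α)) : ∀ q ∈ fnodes ts, ∃ addr, fpos ts addr = some q := by
  cases ts with
  | nil => intro q hq; simp [fnodes] at hq
  | cons t ts =>
    intro q hq
    simp only [fnodes, List.mem_append, List.mem_map] at hq
    rcases hq with h | ⟨p, hp, h⟩
    · obtain ⟨addr, haddr⟩ := tnodes_pos t q h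
      exact ⟨0 :: addr, by simpa [fpos] using haddr⟩
    · obtain ⟨addr, haddr⟩ := fnodes_pos ts p hp
      match addr, haddr with
      | [], haddr => rw [fpos_nil_none] at haddr; simp at haddr
      | kk :: addr, haddr =>
        refine ⟨(kk+1) :: addr, ?_⟩
        simp [fpos, haddr, ← h]
end

theorem seg_def' (s : List γ) (i j : ℕ) : seg s i j = (s.drop i).take (j - i) := by
  simp [seg, List.drop_take]

theorem seg_take (s : List γ) {i j m : ℕ} (h : i + m ≤ j) :
    (seg s i j).take m = seg s i (i + m) := by
  rw [seg_def', seg_def', List.take_take]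
  congr 1
  omega

theorem seg_self (s : List γ) : seg s 0 s.length = s := by
  simp [seg_def']

theorem seg_snoc (s : List γ) {i j : ℕ} {ch : γ} (hij : i ≤ j) (h : s[j]? = some ch) :
    seg s i (j+1) = seg s i j ++ [ch] := by
  rw [seg_def', seg_def', show j + 1 - i = (j - i) + 1 by omega, List.take_succ]
  congr 1
  rw [List.getElem?_drop, show i + (j - i) = j by omega, h]
  rfl

/-- Characters inside the middle part of a decomposition. -/
theorem get_mid {A W B : List γ} {p : ℕ} (h1 : A.length ≤ p) (h2 : p < A.length + W.length) :
    (A ++ W ++ B)[p]? = W[p - A.length]? := by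
  rw [List.append_assoc, get?_app_ge h1, get?_app_lt (by omega)]

theorem seg_mid {A W B : List γ} {x y : ℕ} (hy : y ≤ W.length) :
    seg (A ++ W ++ B) (A.length + x) (A.length + y) = seg W x y := by
  rw [List.append_assoc, seg_append_shift, seg_append_left _ _ hy]

/-- Two nodes cannot close at distinct places: core balance argument. -/
theorem bal_aux {H : List (LTree α)} {o c1 c2 : ℕ} {b : α}
    (hc1 : (pforest H)[c1]? = some (false, b))
    (ho1 : o < c1) (h12 : c1 < c2) (hc2 : c2 ≤ (pforest H).length)
    (hbal : bal (seg (pforest H) (o+1) c1) = 0)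
    (hn : ∀ m, 0 ≤ bal ((seg (pforest H) (o+1) c2).take m)) : False := by
  have h1 : (seg (pforest H) (o+1) c2).take (c1 - o) = seg (pforest H) (o+1) (c1 + 1) := by
    rw [seg_take _ (by omega)]
    congr 1
    omega
  have h2 : seg (pforest H) (o+1) (c1+1) = seg (pforest H) (o+1) c1 ++ [(false, b)] :=
    seg_snoc _ (by omega) hc1
  have := hn (c1 - o)
  rw [h1, h2] at this
  simp [hbal] at this

/-- Two nodes cannot open at distinct places with the same close. -/
theorem bal_aux2 {H : List (LTree α)} {o1 o2 c : ℕ} {b : α}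
    (ho2 : (pforest H)[o2]? = some (true, b))
    (h12 : o1 < o2) (hoc : o2 < c) (hc : c ≤ (pforest H).length)
    (hfull : bal (seg (pforest H) (o1+1) c) = 0)
    (hsuf : bal (seg (pforest H) (o2+1) c) = 0)
    (hn : ∀ m, 0 ≤ bal ((seg (pforest H) (o1+1) c).take m)) : False := by
  have hsplit : seg (pforest H) (o1+1) c =
      seg (pforest H) (o1+1) (o2+1) ++ seg (pforest H) (o2+1) c :=
    (seg_append_seg _ (by omega) (by omega)).symm
  have h2 : seg (pforest H) (o1+1) (o2+1) = seg (pforest H) (o1+1) o2 ++ [(true, b)] :=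
    seg_snoc _ (by omega) ho2
  have h3 : (seg (pforest H) (o1+1) c).take (o2 - (o1+1)) = seg (pforest H) (o1+1) o2 := by
    rw [seg_take _ (by omega)]
    congr 1
    omega
  have hpre := hn (o2 - (o1+1))
  rw [h3] at hpre
  rw [hsplit, h2] at hfull
  simp [hsuf] at hfull
  omega

theorem fnodes_nneg_interior {H : List (LTree α)} {o c : ℕ} (h : (o, c) ∈ fnodes H) :
    bal (seg (pforest H) (o+1) c) = 0 ∧ ∀ m, 0 ≤ bal ((seg (pforest H) (o+1) c).take m) := by
  obtain ⟨cs, hcs⟩ := fnodes_interior H (o, c) h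
  rw [hcs]
  exact ⟨bal_pforest cs, fun m => nneg_pforest cs m⟩

theorem open_unique {H : List (LTree α)} {o c1 c2 : ℕ}
    (h1 : (o, c1) ∈ fnodes H) (h2 : (o, c2) ∈ fnodes H) : c1 = c2 := by
  by_contra hne
  have hb1 := fnodes_bounds H _ h1
  have hb2 := fnodes_bounds H _ h2
  obtain ⟨b1, _, hcc1⟩ := fnodes_char H _ h1
  obtain ⟨b2, _, hcc2⟩ := fnodes_char H _ h2
  rcases lt_or_gt_of_ne hne with hlt | hlt
  · exact bal_aux hcc1 (by simp at hb1 ⊢; omega) hlt (by simp at hb2; omega)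
      (fnodes_nneg_interior h1).1 (fnodes_nneg_interior h2).2
  · exact bal_aux hcc2 (by simp at hb2 ⊢; omega) hlt (by simp at hb1; omega)
      (fnodes_nneg_interior h2).1 (fnodes_nneg_interior h1).2

theorem close_unique {H : List (LTree α)} {o1 o2 c : ℕ}
    (h1 : (o1, c) ∈ fnodes H) (h2 : (o2, c) ∈ fnodes H) : o1 = o2 := by
  by_contra hne
  have hb1 := fnodes_bounds H _ h1
  have hb2 := fnodes_bounds H _ h2
  obtain ⟨b1, hoo1, _⟩ := fnodes_char H _ h1
  obtain ⟨b2, hoo2, _⟩ := fnodes_char H _ h2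
  rcases lt_or_gt_of_ne hne with hlt | hlt
  · exact bal_aux2 hoo2 hlt (by simp at hb2; omega) (by simp at hb1; omega)
      (fnodes_nneg_interior h1).1 (fnodes_nneg_interior h2).1 (fnodes_nneg_interior h1).2
  · exact bal_aux2 hoo1 hlt (by simp at hb1; omega) (by simp at hb2; omega)
      (fnodes_nneg_interior h2).1 (fnodes_nneg_interior h1).1 (fnodes_nneg_interior h2).2

theorem open_ne_close {H : List (LTree α)} {o c o' c' : ℕ}
    (h1 : (o, c) ∈ fnodes H) (h2 : (o', c') ∈ fnodes H) : o ≠ c' := by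
  intro he
  obtain ⟨b1, ho, _⟩ := fnodes_char H _ h1
  obtain ⟨b2, _, hc⟩ := fnodes_char H _ h2
  rw [he, hc] at ho
  simp at ho

/-- Any two nodes sharing an endpoint are equal. -/
theorem nodes_eq {H : List (LTree α)} {q q' : ℕ × ℕ}
    (h1 : q ∈ fnodes H) (h2 : q' ∈ fnodes H)
    (h : q.1 = q'.1 ∨ q.2 = q'.2 ∨ q.1 = q'.2 ∨ q.2 = q'.1) : q = q' := by
  obtain ⟨o, c⟩ := q
  obtain ⟨o', c'⟩ := q'
  rcases h with h | h | h | h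
  · subst h; rw [open_unique h1 h2]
  · subst h; rw [close_unique h1 h2]
  · exact absurd h (open_ne_close h1 h2)
  · exact absurd h.symm (open_ne_close h2 h1)

/-- Membership in `fnodes` from a balance certificate (unique matching of parens). -/
theorem mem_fnodes_of_bal {H : List (LTree α)} {o c : ℕ} {a b : α}
    (hoc : o < c) (hc : c < (pforest H).length)
    (hopen : (pforest H)[o]? = some (true, a))
    (hclose : (pforest H)[c]? = some (false, b))
    (hbal : bal (seg (pforest H) (o+1) c) = 0)
    (hn : ∀ m, 0 ≤ bal ((seg (pforest H) (o+1) c).take m)) : (o, c) ∈ fnodes H := by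
  obtain ⟨q, hq, hor⟩ := fnodes_cover H o (by omega)
  obtain ⟨b0, hq1, hq2⟩ := fnodes_char H _ hq
  rcases hor with ho | ho
  · obtain ⟨o0, c0⟩ := q
    simp only at ho
    subst ho
    have hb0 := fnodes_bounds H _ hq
    simp only at hb0
    rcases lt_trichotomy c c0 with hlt | heq | hlt
    · exact (bal_aux hclose hoc hlt (by omega)
        hbal (fnodes_nneg_interior hq).2).elim
    · rw [← heq] at hq; exact hq
    · exact (bal_aux hq2 (by omega) hlt (by omega)
        (fnodes_nneg_interior hq).1 hn).elim
  · exfalso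
    rw [ho, hq2] at hopen
    simp at hopen

end Dev4
section Dev5
variable {α : Type}

theorem seg_take_eq (W : List (Bool × α)) (x : ℕ) : seg W 0 x = W.take x := by
  simp [seg_def']

theorem seg_mid' {γ : Type} {A W B : List γ} {x y : ℕ} (hx : A.length ≤ x) (hxy : A.length ≤ y) (hy : y ≤ A.length + W.length) :
    seg (A ++ W ++ B) x y = seg W (x - A.length) (y - A.length) := by
  have := seg_mid (A := A) (W := W) (B := B) (x := x - A.length) (y := y - A.length) (by omega)
  rw [show A.length + (x - A.length) = x by omega,
      show A.length + (y - A.length) = y by omega] at this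
  exact this

/-- A node with open paren inside a balanced window has its close inside too. -/
theorem nos {H ws : List (LTree α)} {A B : List (Bool × α)}
    (hdec : pforest H = A ++ pforest ws ++ B) {o c : ℕ} (h : (o, c) ∈ fnodes H)
    (ho : A.length ≤ o ∧ o < A.length + (pforest ws).length) :
    A.length ≤ c ∧ c < A.length + (pforest ws).length := by
  have hW : pforest ws = pforest ws := rfl
  set W := pforest ws with hW
  have hb := fnodes_bounds H _ h
  simp only at hb
  refine ⟨by omega, ?_⟩
  by_contra hcon
  have hc2 : A.length + W.length ≤ c := by omega
  obtain ⟨a, hopen, _⟩ := fnodes_char H _ h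
  have hopenW : W[o - A.length]? = some (true, a) := by
    rw [hdec, get_mid ho.1 ho.2] at hopen; exact hopen
  obtain ⟨hbal, hn⟩ := fnodes_nneg_interior h
  have hpre := hn (A.length + W.length - (o+1))
  rw [seg_take _ (by omega), show o + 1 + (A.length + W.length - (o+1)) = A.length + W.length by omega] at hpre
  have hseg : seg (pforest H) (o+1) (A.length + W.length) = seg W (o + 1 - A.length) W.length := by
    rw [hdec, seg_mid' (by omega) (by omega) (by omega)]
    congr 1
    omega
  rw [hseg] at hpre
  have hsplit : seg W 0 (o + 1 - A.length) ++ seg W (o + 1 - A.length) W.length = seg W 0 W.length :=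
    seg_append_seg _ (by omega) (by omega)
  have hWbal : bal (seg W 0 W.length) = 0 := by rw [seg_self]; exact bal_pforest ws
  have htake : W.take (o + 1 - A.length) = W.take (o - A.length) ++ [(true, a)] := by
    rw [show o + 1 - A.length = (o - A.length) + 1 by omega, List.take_succ, hopenW]
    rfl
  have h1 : bal (seg W 0 (o + 1 - A.length)) = bal (W.take (o - A.length)) + 1 := by
    rw [seg_take_eq, htake]; simp
  have h2 := nneg_pforest ws (o - A.length)
  rw [← hW] at h2
  have := congrArg bal hsplit
  rw [bal_append, hWbal, h1] at this
  omega

/-- A node with close paren inside a balanced window has its open inside too. -/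
theorem nos' {H ws : List (LTree α)} {A B : List (Bool × α)}
    (hdec : pforest H = A ++ pforest ws ++ B) {o c : ℕ} (h : (o, c) ∈ fnodes H)
    (hc : A.length ≤ c ∧ c < A.length + (pforest ws).length) :
    A.length ≤ o ∧ o < A.length + (pforest ws).length := by
  have hW : pforest ws = pforest ws := rfl
  set W := pforest ws with hW
  have hb := fnodes_bounds H _ h
  simp only at hb
  refine ⟨?_, by omega⟩
  by_contra hcon
  have ho1 : o < A.length := by omega
  obtain ⟨a, _, hclose⟩ := fnodes_char H _ h
  have hcloseW : W[c - A.length]? = some (false, a) := by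
    rw [hdec, get_mid hc.1 hc.2] at hclose; exact hclose
  obtain ⟨hbal, hn⟩ := fnodes_nneg_interior h
  have hv := hn (A.length - (o+1))
  rw [seg_take _ (by omega), show o + 1 + (A.length - (o+1)) = A.length by omega] at hv
  have hsplit : seg (pforest H) (o+1) A.length ++ seg (pforest H) A.length c = seg (pforest H) (o+1) c :=
    seg_append_seg _ (by omega) (by omega)
  have hw : seg (pforest H) A.length c = W.take (c - A.length) := by
    rw [hdec, seg_mid' (by omega) (by omega) (by omega)]
    rw [show A.length - A.length = 0 by omega, seg_take_eq]
  have hwn := nneg_pforest ws (c - A.length)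
  rw [← hW] at hwn
  have hbal2 := congrArg bal hsplit
  rw [bal_append, hbal, hw] at hbal2
  have hz : bal (W.take (c - A.length)) = 0 := by omega
  have htake : W.take (c - A.length + 1) = W.take (c - A.length) ++ [(false, a)] := by
    rw [List.take_succ, hcloseW]; rfl
  have := nneg_pforest ws (c - A.length + 1)
  rw [← hW, htake] at this
  simp [hz] at this

theorem FStep.symm' {F G : List (LTree α)} (h : FStep F G) : FStep G F := by
  induction h with
  | relabel pre post ts a b => exact FStep.relabel pre post ts b a
  | delete pre post ts a => exact FStep.insert pre ts post a
  | insert pre mid post a => exact FStep.delete pre post mid a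
  | congr pre post ts ts' a _ ih => exact FStep.congr pre post ts' ts a ih

theorem FEdits.comp {m n : ℕ} {F G H : List (LTree α)}
    (h1 : FEdits m F G) (h2 : FEdits n G H) : FEdits (m + n) F H := by
  induction h1 with
  | refl F => simpa using h2
  | @step m' F' G' H' s _ ih =>
    rw [show m' + 1 + n = (m' + n) + 1 by omega]
    exact FEdits.step s (ih h2)

theorem FEdits.symm' {n : ℕ} {F G : List (LTree α)} (h : FEdits n F G) : FEdits n G F := by
  induction h with
  | refl F => exact FEdits.refl F
  | @step m F G H s _ ih =>
    rw [show m + 1 = m + 1 by rfl]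
    exact FEdits.comp ih (FEdits.step (FStep.symm' s) (FEdits.refl _))

theorem FStep.embed {L R ts ts' : List (LTree α)} (h : FStep ts ts') :
    FStep (L ++ ts ++ R) (L ++ ts' ++ R) := by
  cases h with
  | relabel pre post us a b =>
    have := FStep.relabel (L ++ pre) (post ++ R) us a b
    simpa [List.append_assoc] using this
  | delete pre post us a =>
    have := FStep.delete (L ++ pre) (post ++ R) us a
    simpa [List.append_assoc] using this
  | insert pre mid post a =>
    have := FStep.insert (L ++ pre) mid (post ++ R) a
    simpa [List.append_assoc] using this
  | congr pre post us us' a hs =>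
    have := FStep.congr (L ++ pre) (post ++ R) us us' a hs
    simpa [List.append_assoc] using this

theorem FEdits.embed {n : ℕ} {L R ts ts' : List (LTree α)} (h : FEdits n ts ts') :
    FEdits n (L ++ ts ++ R) (L ++ ts' ++ R) := by
  induction h with
  | refl F => exact FEdits.refl _
  | step s _ ih => exact FEdits.step (FStep.embed s) ih

theorem FEdits.app {m n : ℕ} {as as' bs bs' : List (LTree α)}
    (h1 : FEdits m as as') (h2 : FEdits n bs bs') : FEdits (m + n) (as ++ bs) (as' ++ bs') := by
  have e1 : FEdits m (as ++ bs) (as' ++ bs) := by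
    have := FEdits.embed (L := []) (R := bs) h1
    simpa using this
  have e2 : FEdits n (as' ++ bs) (as' ++ bs') := by
    have := FEdits.embed (L := as') (R := []) h2
    simpa using this
  exact FEdits.comp e1 e2

theorem FEdits.under {n : ℕ} {ts ts' : List (LTree α)} (a : α) (h : FEdits n ts ts') :
    FEdits n [LTree.node a ts] [LTree.node a ts'] := by
  induction h with
  | refl F => exact FEdits.refl _
  | step s _ ih =>
    refine FEdits.step ?_ ih
    have := FStep.congr [] [] _ _ a s
    simpa using this

theorem fsize_append (X Y : List (LTree α)) : fsize (X ++ Y) = fsize X + fsize Y := by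
  induction X with
  | nil => simp [fsize]
  | cons t ts ih => simp [fsize, ih]; try omega

theorem edits_del_aux (N : ℕ) : ∀ X R : List (LTree α), fsize X ≤ N → FEdits (fsize X) (X ++ R) R := by
  induction N with
  | zero =>
    intro X R hX
    match X with
    | [] => simpa [fsize] using FEdits.refl R
    | (LTree.node a ts) :: rest => simp [fsize, tsize] at hX
  | succ N ih =>
    intro X R hX
    match X with
    | [] => simpa [fsize] using FEdits.refl R
    | (LTree.node a ts) :: rest =>
      have hstep : FStep ((LTree.node a ts :: rest) ++ R) ((ts ++ rest) ++ R) := by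
        have := FStep.delete [] (rest ++ R) ts a
        simpa [List.append_assoc] using this
      have hsz : fsize (ts ++ rest) ≤ N := by
        rw [fsize_append]
        simp [fsize, tsize] at hX
        omega
      have := FEdits.step hstep (ih (ts ++ rest) R hsz)
      have heq : fsize (ts ++ rest) + 1 = fsize (LTree.node a ts :: rest) := by
        rw [fsize_append]; simp [fsize, tsize]; omega
      rwa [heq] at this

theorem edits_del (X R : List (LTree α)) : FEdits (fsize X) (X ++ R) R :=
  edits_del_aux (fsize X) X R (le_refl _)

end Dev5
section Dev6
variable {α : Type}

attribute [local instance] Classical.propDecidable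

theorem pstr_ne_nil (t : LTree α) : pstr t ≠ [] := by
  cases t; simp [pstr_eq]

theorem pstr_prefix_eq {t t' : LTree α} {r r' : List (Bool × α)}
    (h : pstr t ++ r = pstr t' ++ r') : pstr t = pstr t' ∧ r = r' := by
  have hlen : (pstr t).length = (pstr t').length := by
    by_contra hne
    rcases Nat.lt_or_ge (pstr t).length (pstr t').length with hlt | hge
    · have htake : pstr t = (pstr t' ++ r').take (pstr t).length := by
        rw [← h, List.take_append_of_le_length (le_refl _), List.take_length]
      rw [List.take_append_of_le_length (le_of_lt hlt)] at htake
      have hb : bal ((pstr t').take (pstr t).length) = 0 := by rw [← htake]; exact bal_pstr t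
      have hpos : 0 < (pstr t).length := List.length_pos_iff.mpr (pstr_ne_nil t)
      have := nneg_pstr t' (pstr t).length hlt hpos
      omega
    · have hlt : (pstr t').length < (pstr t).length := by omega
      have htake : pstr t' = (pstr t ++ r).take (pstr t').length := by
        rw [h, List.take_append_of_le_length (le_refl _), List.take_length]
      rw [List.take_append_of_le_length (le_of_lt hlt)] at htake
      have hb : bal ((pstr t).take (pstr t').length) = 0 := by rw [← htake]; exact bal_pstr t'
      have hpos : 0 < (pstr t').length := List.length_pos_iff.mpr (pstr_ne_nil t')
      have := nneg_pstr t (pstr t').length hlt hpos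
      omega
  exact List.append_inj h hlen

mutual
theorem pstr_inj : ∀ t t' : LTree α, pstr t = pstr t' → t = t'
  | .node a ts, .node a' ts', h => by
    rw [pstr_eq, pstr_eq] at h
    injection h with h1 h2
    injection h1 with _ ha
    have hlen : (pforest ts).length = (pforest ts').length := by
      have := congrArg List.length h2; simpa using this
    obtain ⟨hf, _⟩ := List.append_inj h2 hlen
    rw [pforest_inj ts ts' hf, ha]
theorem pforest_inj : ∀ X Y : List (LTree α), pforest X = pforest Y → X = Y
  | [], [], _ => rfl
  | [], u :: us, h => by
    exfalso
    rw [pforest, pforest] at h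
    exact pstr_ne_nil u (List.append_eq_nil_iff.mp h.symm).1
  | t :: ts, [], h => by
    exfalso
    rw [pforest, pforest] at h
    exact pstr_ne_nil t (List.append_eq_nil_iff.mp h).1
  | t :: ts, u :: us, h => by
    rw [pforest, pforest] at h
    obtain ⟨h1, h2⟩ := pstr_prefix_eq h
    rw [pstr_inj t u h1, pforest_inj ts us h2]
end

/-! Restriction of a forest to a kept set of (global) positions. -/

mutual
noncomputable def rt (K : ℕ → Prop) : LTree α → ℕ → List (LTree α)
  | .node a ts, off =>
    if K off then [LTree.node a (rf K ts (off+1))] else rf K ts (off+1)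
noncomputable def rf (K : ℕ → Prop) : List (LTree α) → ℕ → List (LTree α)
  | [], _ => []
  | t :: ts, off => rt K t off ++ rf K ts (off + (pstr t).length)
end

mutual
noncomputable def dct (K : ℕ → Prop) : LTree α → ℕ → ℕ
  | .node a ts, off => (if K off then 0 else 1) + dcf K ts (off+1)
noncomputable def dcf (K : ℕ → Prop) : List (LTree α) → ℕ → ℕ
  | [], _ => 0
  | t :: ts, off => dct K t off + dcf K ts (off + (pstr t).length)
end

mutual
theorem rt_edits (K : ℕ → Prop) (t : LTree α) (off : ℕ) :
    FEdits (dct K t off) [t] (rt K t off) := by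
  cases t with
  | node a ts =>
    rw [rt, dct]
    by_cases hk : K off
    · rw [if_pos hk, if_pos hk]
      simpa using FEdits.under a (rf_edits K ts (off+1))
    · rw [if_neg hk, if_neg hk]
      refine FEdits.comp (m := 1) ?_ (rf_edits K ts (off+1))
      refine FEdits.step ?_ (FEdits.refl _)
      have := FStep.delete ([] : List (LTree α)) [] ts a
      simpa using this
theorem rf_edits (K : ℕ → Prop) (ts : List (LTree α)) (off : ℕ) :
    FEdits (dcf K ts off) ts (rf K ts off) := by
  cases ts with
  | nil => exact FEdits.refl _
  | cons t ts =>
    rw [rf, dcf]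
    have h1 := rt_edits K t off
    have h2 := rf_edits K ts (off + (pstr t).length)
    have := FEdits.app h1 h2
    simpa using this
end

mutual
theorem rt_fsize (K : ℕ → Prop) (t : LTree α) (off : ℕ) :
    fsize (rt K t off) + dct K t off = tsize t := by
  cases t with
  | node a ts =>
    rw [rt, dct]
    have := rf_fsize K ts (off+1)
    by_cases hk : K off <;> simp [hk, fsize, tsize] <;> omega
theorem rf_fsize (K : ℕ → Prop) (ts : List (LTree α)) (off : ℕ) :
    fsize (rf K ts off) + dcf K ts off = fsize ts := by
  cases ts with
  | nil => simp [rf, dcf, fsize]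
  | cons t ts =>
    rw [rf, dcf, fsize_append]
    have h1 := rt_fsize K t off
    have h2 := rf_fsize K ts (off + (pstr t).length)
    simp [fsize]
    omega
end

/-- Extraction of the kept characters of a string, positions shifted by `off`. -/
noncomputable def ext (K : ℕ → Prop) (s : List (Bool × α)) (off : ℕ) : List (Bool × α) :=
  ((List.range s.length).filter (fun r => K (off + r))).filterMap (fun r => s[r]?)

theorem ext_nil (K : ℕ → Prop) (off : ℕ) : ext K ([] : List (Bool × α)) off = [] := by
  simp [ext]

theorem ext_append (K : ℕ → Prop) (X Y : List (Bool × α)) (off : ℕ) :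
    ext K (X ++ Y) off = ext K X off ++ ext K Y (off + X.length) := by
  unfold ext
  rw [List.length_append, List.range_add, List.filter_append, List.filterMap_append]
  congr 1
  · apply List.filterMap_congr
    intro r hr
    simp only [List.mem_filter, List.mem_range] at hr
    rw [get?_app_lt hr.1]
  · rw [List.filter_map, List.filterMap_map]
    have hp : ((fun r => decide (K (off + r))) ∘ fun x => X.length + x)
        = (fun r => decide (K (off + X.length + r))) := by
      funext r
      simp [Function.comp, Nat.add_assoc]
    rw [hp]
    apply List.filterMap_congr
    intro r hr
    simp only [List.mem_filter, List.mem_range] at hr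
    simp only [Function.comp]
    rw [get?_app_ge (by omega)]
    congr 1
    omega

theorem ext_single (K : ℕ → Prop) (ch : Bool × α) (off : ℕ) :
    ext K [ch] off = if K off then [ch] else [] := by
  have h1 : List.range 1 = [0] := by decide
  by_cases hk : K off <;> simp [ext, hk, h1]

theorem filterMap_get_length {γ : Type} (s : List γ) :
    ∀ l : List ℕ, (∀ r ∈ l, r < s.length) → (l.filterMap (fun r => s[r]?)).length = l.length := by
  intro l
  induction l with
  | nil => simp
  | cons r l ih =>
    intro hb
    have hr : r < s.length := hb r (by simp)
    rw [List.filterMap_cons]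
    rw [List.getElem?_eq_getElem hr]
    simp only [List.length_cons]
    rw [ih (fun x hx => hb x (by simp [hx]))]

theorem ext_length (K : ℕ → Prop) (s : List (Bool × α)) (off : ℕ) :
    (ext K s off).length = ((List.range s.length).filter (fun r => K (off + r))).length := by
  unfold ext
  apply filterMap_get_length
  intro r hr
  simp only [List.mem_filter, List.mem_range] at hr
  exact hr.1

end Dev6
section Dev7
variable {α : Type}

attribute [local instance] Classical.propDecidable

theorem pforest_append (X Y : List (LTree α)) : pforest (X ++ Y) = pforest X ++ pforest Y := by
  induction X with
  | nil => simp [pforest]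
  | cons t ts ih => simp [pforest, ih]

mutual
theorem rt_str (K : ℕ → Prop) (t : LTree α) (off : ℕ)
    (hcl : ∀ q ∈ tnodes t, (K (off + q.1) ↔ K (off + q.2))) :
    pforest (rt K t off) = ext K (pstr t) off := by
  cases t with
  | node a ts =>
    have hroot : K off ↔ K (off + ((pforest ts).length + 1)) := by
      have := hcl (0, (pforest ts).length + 1) (by simp [tnodes])
      simpa using this
    have hinner : ∀ q ∈ fnodes ts, (K (off + 1 + q.1) ↔ K (off + 1 + q.2)) := by
      intro q hq
      have h2 := hcl (q.1 + 1, q.2 + 1)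
        (by simp only [tnodes, List.mem_cons, List.mem_map]; exact Or.inr ⟨q, hq, rfl⟩)
      simp only at h2
      rw [show off + (q.1 + 1) = off + 1 + q.1 by omega,
          show off + (q.2 + 1) = off + 1 + q.2 by omega] at h2
      exact h2
    have hstr : pstr (LTree.node a ts) = [(true,a)] ++ (pforest ts ++ [(false,a)]) := by
      simp [pstr_eq]
    rw [hstr, ext_append, ext_append, ext_single, ext_single]
    simp only [List.length_singleton]
    have hrec := rf_str K ts (off + 1) hinner
    rw [rt]
    by_cases hk : K off
    · have hk2 : K (off + 1 + (pforest ts).length) := by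
        rw [show off + 1 + (pforest ts).length = off + ((pforest ts).length + 1) by omega]
        exact hroot.mp hk
      rw [if_pos hk, if_pos hk, if_pos hk2]
      simp [pforest, pstr_eq, hrec]
    · have hk2 : ¬ K (off + 1 + (pforest ts).length) := by
        rw [show off + 1 + (pforest ts).length = off + ((pforest ts).length + 1) by omega]
        exact fun hcon => hk (hroot.mpr hcon)
      rw [if_neg hk, if_neg hk, if_neg hk2]
      simp [hrec]
theorem rf_str (K : ℕ → Prop) (ts : List (LTree α)) (off : ℕ)
    (hcl : ∀ q ∈ fnodes ts, (K (off + q.1) ↔ K (off + q.2))) :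
    pforest (rf K ts off) = ext K (pforest ts) off := by
  cases ts with
  | nil => simp [rf, pforest, ext_nil]
  | cons t ts =>
    have hl : ∀ q ∈ tnodes t, (K (off + q.1) ↔ K (off + q.2)) := by
      intro q hq
      exact hcl q (by simp [fnodes, hq])
    have hr : ∀ q ∈ fnodes ts, (K (off + (pstr t).length + q.1) ↔ K (off + (pstr t).length + q.2)) := by
      intro q hq
      have := hcl (q.1 + (pstr t).length, q.2 + (pstr t).length)
        (by simp only [fnodes, List.mem_append, List.mem_map]; exact Or.inr ⟨q, hq, rfl⟩)
      simp only at this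
      rw [show off + (q.1 + (pstr t).length) = off + (pstr t).length + q.1 by omega,
          show off + (q.2 + (pstr t).length) = off + (pstr t).length + q.2 by omega] at this
      exact this
    rw [rf, pforest_append, pforest, ext_append, rt_str K t off hl,
        rf_str K ts (off + (pstr t).length) hr]
end

theorem count_split (l : List ℕ) (p : ℕ → Prop) :
    (l.filter (fun x => p x)).length + (l.filter (fun x => ¬ p x)).length = l.length := by
  induction l with
  | nil => simp
  | cons x l ih =>
    rw [List.filter_cons, List.filter_cons]
    by_cases hx : p x
    · rw [if_pos (by simpa using hx), if_neg (by simpa using hx)]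
      simp only [List.length_cons]
      omega
    · rw [if_neg (by simpa using hx), if_pos (by simpa using hx)]
      simp only [List.length_cons]
      omega

theorem dcf_count (K : ℕ → Prop) (ts : List (LTree α)) (off : ℕ)
    (hcl : ∀ q ∈ fnodes ts, (K (off + q.1) ↔ K (off + q.2))) :
    2 * dcf K ts off =
      ((List.range (pforest ts).length).filter (fun r => ¬ K (off + r))).length := by
  have h1 := rf_fsize K ts off
  have h2 := congrArg List.length (rf_str K ts off hcl)
  rw [ext_length, len_pforest, len_pforest] at h2
  have h3 := count_split (List.range (pforest ts).length) (fun r => K (off + r))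
  rw [len_pforest] at h3
  simp only [List.length_range] at h3
  rw [len_pforest]
  omega

end Dev7
section Dev8
variable {α : Type} {γ : Type}

attribute [local instance] Classical.propDecidable

theorem seg_char {s t : List γ} {i j i' : ℕ}
    (hseq : seg s i j = seg t i' (i' + (j - i)))
    (hj : j ≤ s.length) {p : ℕ} (hp : i ≤ p) (hpj : p < j) :
    t[p - i + i']? = s[p]? := by
  have h1 := seg_get_eq s (i := i) (j := j) (m := p - i) (by omega) hj
  have h2 := seg_getElem? t (i := i') (j := i' + (j - i)) (m := p - i) (by omega)
  rw [hseq, h2] at h1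
  rw [List.getElem?_take] at h1
  rw [if_pos (by omega)] at h1
  rw [show i + (p - i) = p by omega] at h1
  rw [show p - i + i' = i' + (p - i) by omega]
  exact h1

theorem list_ext_get? {l₁ l₂ : List γ} (hlen : l₁.length = l₂.length)
    (h : ∀ m, m < l₁.length → l₁[m]? = l₂[m]?) : l₁ = l₂ := by
  apply List.ext_getElem?
  intro m
  rcases lt_or_ge m l₁.length with hm | hm
  · exact h m hm
  · rw [List.getElem?_eq_none hm, List.getElem?_eq_none (by omega)]

theorem seg_transfer {s t : List γ} {i j i' : ℕ}
    (hseq : seg s i j = seg t i' (i' + (j - i)))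
    (hj : j ≤ s.length) (hj' : i' + (j - i) ≤ t.length)
    {x y : ℕ} (hx : i ≤ x) (hxy : x ≤ y) (hy : y ≤ j) :
    seg s x y = seg t (x - i + i') (y - i + i') := by
  have hlen1 : (seg s x y).length = y - x := by
    rw [seg_length]; omega
  have hlen2 : (seg t (x - i + i') (y - i + i')).length = y - x := by
    rw [seg_length]; omega
  apply list_ext_get?
  · omega
  · intro m hm
    rw [hlen1] at hm
    rw [seg_get_eq s (by omega) (by omega), seg_get_eq t (by omega) (by omega)]
    rw [show x - i + i' + m = (x + m) - i + i' by omega]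
    exact (seg_char hseq hj (by omega) (by omega)).symm

theorem bal_take_append (X Y : List (Bool × α)) (m : ℕ) :
    bal ((X ++ Y).take m) = bal (X.take m) + bal (Y.take (m - X.length)) := by
  rw [List.take_append, bal_append]

theorem seg_decomp (s : List γ) {i j : ℕ} (hij : i ≤ j) (hj : j ≤ s.length) :
    s = s.take i ++ seg s i j ++ s.drop j := by
  rw [List.append_assoc]
  rw [show seg s i j ++ s.drop j = s.drop i by
    rw [seg_def']
    have : s.drop j = (s.drop i).drop (j - i) := by rw [List.drop_drop]; congr 1; omega
    rw [this, List.take_append_drop]]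
  rw [List.take_append_drop]

theorem pforest_single (t : LTree α) : pforest [t] = pstr t := by
  simp [pforest]

theorem sorted_ext : ∀ {l₁ l₂ : List ℕ}, l₁.Pairwise (· < ·) → l₂.Pairwise (· < ·) →
    (∀ x, x ∈ l₁ ↔ x ∈ l₂) → l₁ = l₂
  | [], [], _, _, _ => rfl
  | [], b :: l₂, _, _, hm => by
    exact absurd ((hm b).mpr (by simp)) (by simp)
  | a :: l₁, [], _, _, hm => by
    exact absurd ((hm a).mp (by simp)) (by simp)
  | a :: l₁, b :: l₂, h₁, h₂, hm => by
    have hab : a = b := by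
      have ha := (hm a).mp (by simp)
      have hb := (hm b).mpr (by simp)
      simp only [List.mem_cons] at ha hb
      rcases ha with ha | ha
      · exact ha
      · rcases hb with hb | hb
        · exact hb.symm
        · have h1 := (List.pairwise_cons.mp h₁).1 b hb
          have h2 := (List.pairwise_cons.mp h₂).1 a ha
          omega
    subst hab
    have htl : ∀ x, x ∈ l₁ ↔ x ∈ l₂ := by
      intro x
      constructor
      · intro hx
        have hax := (List.pairwise_cons.mp h₁).1 x hx
        have := (hm x).mp (by simp [hx])
        simp only [List.mem_cons] at this
        rcases this with h | h
        · omega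
        · exact h
      · intro hx
        have hax := (List.pairwise_cons.mp h₂).1 x hx
        have := (hm x).mpr (by simp [hx])
        simp only [List.mem_cons] at this
        rcases this with h | h
        · omega
        · exact h
    rw [sorted_ext (List.pairwise_cons.mp h₁).2 (List.pairwise_cons.mp h₂).2 htl]

/-- The margin-interior positions of a piece. -/
def InMargin (k : ℕ) : Piece → ℕ → Prop
  | .fpiece i j, x => i + 2*k ≤ x ∧ x + 2*k + 1 ≤ j
  | .cpiece i₁ j₁ i₂ j₂, x =>
      (i₁ + 2*k ≤ x ∧ x + 2*k + 1 ≤ j₁) ∨ (i₂ + 2*k ≤ x ∧ x + 2*k + 1 ≤ j₂)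

theorem inmargin_covers {k : ℕ} {π : Piece} {x : ℕ} (h : InMargin k π x) : Covers π x := by
  cases π with
  | fpiece i j => simp only [InMargin] at h; exact ⟨by omega, by omega⟩
  | cpiece i₁ j₁ i₂ j₂ =>
    simp only [InMargin] at h
    rcases h with h | h
    · exact Or.inl ⟨by omega, by omega⟩
    · exact Or.inr ⟨by omega, by omega⟩

theorem matched_fpiece {F G : List (LTree α)} {k i j : ℕ} :
    MatchedPiece F G k (.fpiece i j) =
    (∃ i', Near k i i' ∧ i' + (j - i) ≤ (pforest G).length ∧
      seg (pforest F) i j = seg (pforest G) i' (i' + (j - i))) := rfl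

theorem matched_cpiece {F G : List (LTree α)} {k i₁ j₁ i₂ j₂ : ℕ} :
    MatchedPiece F G k (.cpiece i₁ j₁ i₂ j₂) =
    (∃ i₁' i₂', Near k i₁ i₁' ∧ Near k i₂ i₂' ∧
      i₁' + (j₁ - i₁) < i₂' ∧ i₂' + (j₂ - i₂) ≤ (pforest G).length ∧
      seg (pforest F) i₁ j₁ = seg (pforest G) i₁' (i₁' + (j₁ - i₁)) ∧
      seg (pforest F) i₂ j₂ = seg (pforest G) i₂' (i₂' + (j₂ - i₂)) ∧
      (∃ t : LTree α, seg (pforest G) i₁' (i₂' + (j₂ - i₂)) = pstr t) ∧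
      (∃ ts : List (LTree α), seg (pforest G) (i₁' + (j₁ - i₁)) i₂' = pforest ts)) := rfl

noncomputable def fpS (F G : List (LTree α)) (k i j : ℕ) : ℕ :=
  if h : MatchedPiece F G k (.fpiece i j) then Classical.choose h else 0

noncomputable def cpS1 (F G : List (LTree α)) (k i₁ j₁ i₂ j₂ : ℕ) : ℕ :=
  if h : MatchedPiece F G k (.cpiece i₁ j₁ i₂ j₂) then Classical.choose h else 0

noncomputable def cpS2 (F G : List (LTree α)) (k i₁ j₁ i₂ j₂ : ℕ) : ℕ :=
  if h : MatchedPiece F G k (.cpiece i₁ j₁ i₂ j₂) then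
    Classical.choose (Classical.choose_spec h) else 0

theorem fpS_spec {F G : List (LTree α)} {k i j : ℕ} (h : MatchedPiece F G k (.fpiece i j)) :
    Near k i (fpS F G k i j) ∧ fpS F G k i j + (j - i) ≤ (pforest G).length ∧
      seg (pforest F) i j = seg (pforest G) (fpS F G k i j) (fpS F G k i j + (j - i)) := by
  rw [fpS, dif_pos h]
  exact Classical.choose_spec h

theorem cpS_spec {F G : List (LTree α)} {k i₁ j₁ i₂ j₂ : ℕ}
    (h : MatchedPiece F G k (.cpiece i₁ j₁ i₂ j₂)) :
    Near k i₁ (cpS1 F G k i₁ j₁ i₂ j₂) ∧ Near k i₂ (cpS2 F G k i₁ j₁ i₂ j₂) ∧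
    cpS1 F G k i₁ j₁ i₂ j₂ + (j₁ - i₁) < cpS2 F G k i₁ j₁ i₂ j₂ ∧
    cpS2 F G k i₁ j₁ i₂ j₂ + (j₂ - i₂) ≤ (pforest G).length ∧
    seg (pforest F) i₁ j₁ = seg (pforest G) (cpS1 F G k i₁ j₁ i₂ j₂) (cpS1 F G k i₁ j₁ i₂ j₂ + (j₁ - i₁)) ∧
    seg (pforest F) i₂ j₂ = seg (pforest G) (cpS2 F G k i₁ j₁ i₂ j₂) (cpS2 F G k i₁ j₁ i₂ j₂ + (j₂ - i₂)) ∧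
    (∃ ts : List (LTree α), seg (pforest G) (cpS1 F G k i₁ j₁ i₂ j₂ + (j₁ - i₁)) (cpS2 F G k i₁ j₁ i₂ j₂) = pforest ts) := by
  rw [cpS1, cpS2, dif_pos h, dif_pos h]
  obtain ⟨h1, h2, h3, h4, h5, h6, _, h8⟩ :=
    Classical.choose_spec (Classical.choose_spec h)
  exact ⟨h1, h2, h3, h4, h5, h6, h8⟩

noncomputable def pshift (F G : List (LTree α)) (k : ℕ) : Piece → ℕ → ℕ
  | .fpiece i j, p => p - i + fpS F G k i j
  | .cpiece i₁ j₁ i₂ j₂, p =>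
      if p < j₁ then p - i₁ + cpS1 F G k i₁ j₁ i₂ j₂ else p - i₂ + cpS2 F G k i₁ j₁ i₂ j₂

end Dev8
section Dev9
variable {α : Type}

attribute [local instance] Classical.propDecidable

/-- Kept node pair. -/
def KeepP (F G : List (LTree α)) (k : ℕ) (pieces : List Piece) (o c : ℕ) : Prop :=
  (o, c) ∈ fnodes F ∧ ∃ π ∈ pieces, MatchedPiece F G k π ∧ InMargin k π o ∧ InMargin k π c

/-- Kept position. -/
def KeepPos (F G : List (LTree α)) (k : ℕ) (pieces : List Piece) (p : ℕ) : Prop :=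
  ∃ o c, KeepP F G k pieces o c ∧ (p = o ∨ p = c)

noncomputable def covP (pieces : List Piece) (p : ℕ) : Piece :=
  if h : ∃ π, π ∈ pieces ∧ Covers π p then Classical.choose h else .fpiece 0 0

noncomputable def tgtF (F G : List (LTree α)) (k : ℕ) (pieces : List Piece) (p : ℕ) : ℕ :=
  pshift F G k (covP pieces p) p

def PDisj (pieces : List Piece) : Prop :=
  List.Pairwise (fun π₁ π₂ => ∀ p, ¬(Covers π₁ p ∧ Covers π₂ p)) pieces

theorem cover_unique {pieces : List Piece} (hdisj : PDisj pieces) {π₁ π₂ : Piece}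
    (h₁ : π₁ ∈ pieces) (h₂ : π₂ ∈ pieces) {p : ℕ}
    (hc₁ : Covers π₁ p) (hc₂ : Covers π₂ p) : π₁ = π₂ := by
  by_contra hne
  have hsymm : Symmetric (fun π₁ π₂ : Piece => ∀ p, ¬(Covers π₁ p ∧ Covers π₂ p)) :=
    fun a b hab q ⟨x1, x2⟩ => hab q ⟨x2, x1⟩
  exact (haveI : Std.Symm (fun π₁ π₂ : Piece => ∀ p, ¬(Covers π₁ p ∧ Covers π₂ p)) := ⟨fun a b h => hsymm h⟩; hdisj.forall h₁ h₂ hne) p ⟨hc₁, hc₂⟩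

theorem covP_eq {pieces : List Piece} (hdisj : PDisj pieces) {π : Piece} {p : ℕ}
    (hπ : π ∈ pieces) (hc : Covers π p) : covP pieces p = π := by
  rw [covP, dif_pos ⟨π, hπ, hc⟩]
  obtain ⟨hm, hcv⟩ := Classical.choose_spec (⟨π, hπ, hc⟩ :
    ∃ π', π' ∈ pieces ∧ Covers π' p)
  exact cover_unique hdisj hm hπ hcv hc

theorem keep_margin {F G : List (LTree α)} {k : ℕ} {pieces : List Piece} {p : ℕ}
    (h : KeepPos F G k pieces p) :
    ∃ π ∈ pieces, MatchedPiece F G k π ∧ InMargin k π p := by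
  obtain ⟨o, c, ⟨_, π, hπ, hm, ho, hc⟩, hor⟩ := h
  rcases hor with rfl | rfl
  · exact ⟨π, hπ, hm, ho⟩
  · exact ⟨π, hπ, hm, hc⟩

theorem tgt_mono {F G : List (LTree α)} {k : ℕ} {pieces : List Piece}
    (hval : ∀ π ∈ pieces, ValidPiece F π) (hdisj : PDisj pieces)
    {p q : ℕ} (hp : KeepPos F G k pieces p) (hq : KeepPos F G k pieces q) (hpq : p < q) :
    tgtF F G k pieces p < tgtF F G k pieces q := by
  obtain ⟨π, hπ, hmπ, hip⟩ := keep_margin hp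
  obtain ⟨ρ, hρ, hmρ, hiq⟩ := keep_margin hq
  rw [tgtF, tgtF, covP_eq hdisj hπ (inmargin_covers hip), covP_eq hdisj hρ (inmargin_covers hiq)]
  by_cases hpr : π = ρ
  · subst hpr
    cases π with
    | fpiece i j =>
      simp only [InMargin] at hip hiq
      simp only [pshift]
      omega
    | cpiece i₁ j₁ i₂ j₂ =>
      obtain ⟨hv1, hv2, hv3, hv4, _, _⟩ := hval _ hπ
      obtain ⟨hn1, hn2, hord, hbd, _, _, _⟩ := cpS_spec hmπ
      simp only [InMargin] at hip hiq
      simp only [pshift]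
      obtain ⟨hn1a, hn1b⟩ := hn1
      obtain ⟨hn2a, hn2b⟩ := hn2
      rcases hip with hip | hip <;> rcases hiq with hiq | hiq
      · rw [if_pos (by omega), if_pos (by omega)]; omega
      · rw [if_pos (by omega), if_neg (by omega)]; omega
      · omega
      · rw [if_neg (by omega), if_neg (by omega)]; omega
  · have hR : ∀ x, ¬(Covers π x ∧ Covers ρ x) := by
      have hsymm : Symmetric (fun π₁ π₂ : Piece => ∀ p, ¬(Covers π₁ p ∧ Covers π₂ p)) :=
        fun a b hab x ⟨x1, x2⟩ => hab x ⟨x2, x1⟩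
      exact (haveI : Std.Symm (fun π₁ π₂ : Piece => ∀ p, ¬(Covers π₁ p ∧ Covers π₂ p)) := ⟨fun a b h => hsymm h⟩; hdisj.forall hπ hρ hpr)
    have idata : ∀ (σ : Piece) (x : ℕ), σ ∈ pieces → MatchedPiece F G k σ → InMargin k σ x →
        ∃ lo hi sh, (∀ y, lo ≤ y → y < hi → Covers σ y) ∧ lo + 2*k ≤ x ∧ x + 2*k + 1 ≤ hi ∧
          lo ≤ sh + k ∧ sh ≤ lo + k ∧ pshift F G k σ x = x - lo + sh := by
      intro σ x hσ hmσ hiσ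
      cases σ with
      | fpiece i j =>
        obtain ⟨⟨hna, hnb⟩, _, _⟩ := fpS_spec hmσ
        simp only [InMargin] at hiσ
        exact ⟨i, j, fpS F G k i j, fun y h1 h2 => ⟨h1, h2⟩, hiσ.1, hiσ.2, hna, hnb, rfl⟩
      | cpiece i₁ j₁ i₂ j₂ =>
        obtain ⟨hv1, hv2, hv3, hv4, _, _⟩ := hval _ hσ
        obtain ⟨⟨h1a, h1b⟩, ⟨h2a, h2b⟩, hord, hbd, _, _, _⟩ := cpS_spec hmσ
        simp only [InMargin] at hiσ
        rcases hiσ with hiσ | hiσ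
        · refine ⟨i₁, j₁, cpS1 F G k i₁ j₁ i₂ j₂, fun y h1 h2 => Or.inl ⟨h1, h2⟩,
            hiσ.1, hiσ.2, h1a, h1b, ?_⟩
          simp only [pshift]
          rw [if_pos (by omega)]
        · refine ⟨i₂, j₂, cpS2 F G k i₁ j₁ i₂ j₂, fun y h1 h2 => Or.inr ⟨h1, h2⟩,
            hiσ.1, hiσ.2, h2a, h2b, ?_⟩
          simp only [pshift]
          rw [if_neg (by omega)]
    obtain ⟨lo, hi, sh, hcov1, hm1, hm2, hs1, hs2, heq1⟩ := idata π p hπ hmπ hip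
    obtain ⟨mo, mi, sh', hcov2, hm3, hm4, hs3, hs4, heq2⟩ := idata ρ q hρ hmρ hiq
    have hsep : hi ≤ mo := by
      by_contra hcon
      refine hR (max lo mo) ⟨hcov1 _ (le_max_left _ _) ?_, hcov2 _ (le_max_right _ _) ?_⟩
      · rcases max_cases lo mo with ⟨h, _⟩ | ⟨h, _⟩ <;> omega
      · rcases max_cases lo mo with ⟨h, _⟩ | ⟨h, _⟩ <;> omega
    rw [heq1, heq2]
    omega

end Dev9
section Dev10
variable {α : Type}

attribute [local instance] Classical.propDecidable

theorem keep_node {F G : List (LTree α)} {k : ℕ} {pieces : List Piece}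
    (hval : ∀ π ∈ pieces, ValidPiece F π) (hdisj : PDisj pieces)
    {o c : ℕ} (h : KeepP F G k pieces o c) :
    (tgtF F G k pieces o, tgtF F G k pieces c) ∈ fnodes G := by
  obtain ⟨hmem, π, hπ, hm, hmo, hmc⟩ := h
  have hbF := fnodes_bounds F _ hmem
  simp only at hbF
  obtain ⟨a0, hchO, hchC⟩ := fnodes_char F _ hmem
  simp only at hchO hchC
  obtain ⟨hbal, hnn⟩ := fnodes_nneg_interior hmem
  have common : ∀ lo hi sh : ℕ,
      seg (pforest F) lo hi = seg (pforest G) sh (sh + (hi - lo)) →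
      hi ≤ (pforest F).length → sh + (hi - lo) ≤ (pforest G).length →
      lo ≤ o → c < hi →
      tgtF F G k pieces o = o - lo + sh → tgtF F G k pieces c = c - lo + sh →
      (tgtF F G k pieces o, tgtF F G k pieces c) ∈ fnodes G := by
    intro lo hi sh hseq hhi hbd hlo hchi hto htc
    rw [hto, htc]
    have hint : seg (pforest F) (o+1) c =
        seg (pforest G) (o+1 - lo + sh) (c - lo + sh) :=
      seg_transfer hseq hhi hbd (by omega) (by omega) (by omega)
    rw [show o + 1 - lo + sh = (o - lo + sh) + 1 by omega] at hint
    apply mem_fnodes_of_bal (a := a0) (b := a0) (by omega) (by omega)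
    · rw [seg_char hseq hhi hlo (by omega)]; exact hchO
    · rw [seg_char hseq hhi (by omega) (by omega)]; exact hchC
    · rw [← hint]; exact hbal
    · intro m; rw [← hint]; exact hnn m
  cases π with
  | fpiece i j =>
    obtain ⟨hvij, hvj, _⟩ := hval _ hπ
    obtain ⟨hnear, hbd, hseq⟩ := fpS_spec hm
    simp only [InMargin] at hmo hmc
    have hto : tgtF F G k pieces o = o - i + fpS F G k i j := by
      rw [tgtF, covP_eq hdisj hπ (inmargin_covers (k := k) (π := .fpiece i j)
        (x := o) ⟨by omega, by omega⟩)]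
      rfl
    have htc : tgtF F G k pieces c = c - i + fpS F G k i j := by
      rw [tgtF, covP_eq hdisj hπ (inmargin_covers (k := k) (π := .fpiece i j)
        (x := c) ⟨by omega, by omega⟩)]
      rfl
    exact common i j (fpS F G k i j) hseq hvj hbd (by omega) (by omega) hto htc
  | cpiece i₁ j₁ i₂ j₂ =>
    obtain ⟨hv1, hv2, hv3, hv4, ⟨t0, hspan⟩, ⟨ws, hws⟩⟩ := hval _ hπ
    obtain ⟨hn1, hn2, hord, hbd, hseq1, hseq2, ⟨ws', hws'⟩⟩ := cpS_spec hm
    have hcovO : Covers (Piece.cpiece i₁ j₁ i₂ j₂) o := inmargin_covers (k := k) hmo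
    have hcovC : Covers (Piece.cpiece i₁ j₁ i₂ j₂) c := inmargin_covers (k := k) hmc
    have hto : tgtF F G k pieces o = pshift F G k (.cpiece i₁ j₁ i₂ j₂) o := by
      rw [tgtF, covP_eq hdisj hπ hcovO]
    have htc : tgtF F G k pieces c = pshift F G k (.cpiece i₁ j₁ i₂ j₂) c := by
      rw [tgtF, covP_eq hdisj hπ hcovC]
    simp only [InMargin] at hmo hmc
    obtain ⟨hn1a, hn1b⟩ := hn1
    obtain ⟨hn2a, hn2b⟩ := hn2
    rcases hmo with hmo | hmo <;> rcases hmc with hmc | hmc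
    · refine common i₁ j₁ (cpS1 F G k i₁ j₁ i₂ j₂) hseq1 (by omega) (by omega)
        (by omega) (by omega) ?_ ?_
      · rw [hto]; simp only [pshift]; rw [if_pos (by omega)]
      · rw [htc]; simp only [pshift]; rw [if_pos (by omega)]
    · -- spine case
      have htoe : tgtF F G k pieces o = o - i₁ + cpS1 F G k i₁ j₁ i₂ j₂ := by
        rw [hto]; simp only [pshift]; rw [if_pos (by omega)]
      have htce : tgtF F G k pieces c = c - i₂ + cpS2 F G k i₁ j₁ i₂ j₂ := by
        rw [htc]; simp only [pshift]; rw [if_neg (by omega)]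
      rw [htoe, htce]
      set s1 := cpS1 F G k i₁ j₁ i₂ j₂
      set s2 := cpS2 F G k i₁ j₁ i₂ j₂
      have hX : seg (pforest F) (o+1) j₁ =
          seg (pforest G) (o + 1 - i₁ + s1) (j₁ - i₁ + s1) :=
        seg_transfer hseq1 (by omega) (by omega) (by omega) (by omega) (by omega)
      rw [show o + 1 - i₁ + s1 = o - i₁ + s1 + 1 by omega,
          show j₁ - i₁ + s1 = s1 + (j₁ - i₁) by omega] at hX
      have hY : seg (pforest F) i₂ c = seg (pforest G) (i₂ - i₂ + s2) (c - i₂ + s2) :=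
        seg_transfer hseq2 (by omega) (by omega) (by omega) (by omega) (by omega)
      rw [show i₂ - i₂ + s2 = s2 by omega] at hY
      have hGdec : seg (pforest G) (o - i₁ + s1 + 1) (c - i₂ + s2) =
          seg (pforest G) (o - i₁ + s1 + 1) (s1 + (j₁ - i₁)) ++
          seg (pforest G) (s1 + (j₁ - i₁)) s2 ++ seg (pforest G) s2 (c - i₂ + s2) := by
        rw [seg_append_seg _ (by omega) (by omega), seg_append_seg _ (by omega) (by omega)]
      rw [← hX, hws', ← hY] at hGdec
      have hFdec : seg (pforest F) (o+1) c =
          seg (pforest F) (o+1) j₁ ++ seg (pforest F) j₁ i₂ ++ seg (pforest F) i₂ c := by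
        rw [seg_append_seg _ (by omega) (by omega), seg_append_seg _ (by omega) (by omega)]
      rw [hws] at hFdec
      have hlenW : (pforest ws).length = i₂ - j₁ := by
        have := congrArg List.length hws
        rw [seg_length] at this
        omega
      apply mem_fnodes_of_bal (a := a0) (b := a0) (by omega) (by omega)
      · rw [seg_char hseq1 (by omega) (by omega) (by omega)]
        exact hchO
      · rw [seg_char hseq2 (by omega) (by omega) (by omega)]
        exact hchC
      · rw [hGdec]
        rw [hFdec] at hbal
        rw [bal_append, bal_append] at hbal ⊢
        rw [bal_pforest ws']
        rw [bal_pforest ws] at hbal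
        omega
      · intro m
        rw [hGdec]
        rw [hFdec] at hnn
        rw [bal_take_append, bal_take_append, List.length_append]
        set X := seg (pforest F) (o+1) j₁ with hXdef
        set Y := seg (pforest F) i₂ c with hYdef
        rcases le_or_gt m X.length with hz1 | hz1
        · have h1 := hnn m
          rw [bal_take_append, bal_take_append, List.length_append] at h1
          rw [show m - X.length = 0 by omega] at h1 ⊢
          rw [show m - (X.length + (pforest ws).length) = 0 by omega] at h1
          rw [show m - (X.length + (pforest ws').length) = 0 by omega]
          simp only [List.take_zero, bal_nil] at h1 ⊢
          omega
        · rcases le_or_gt m (X.length + (pforest ws').length) with hz2 | hz2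
          · rw [show m - (X.length + (pforest ws').length) = 0 by omega]
            simp only [List.take_zero, bal_nil]
            rw [List.take_of_length_le (by omega)]
            have h1 := hnn X.length
            rw [bal_take_append, bal_take_append, List.length_append] at h1
            rw [show X.length - X.length = 0 by omega,
                show X.length - (X.length + (pforest ws).length) = 0 by omega] at h1
            simp only [List.take_zero, bal_nil, List.take_length] at h1
            have h2 := nneg_pforest ws' (m - X.length)
            omega
          · rw [List.take_of_length_le (by omega), List.take_of_length_le (by omega)]
            have h1 := hnn (X.length + (pforest ws).length + (m - (X.length + (pforest ws').length)))
            rw [bal_take_append, bal_take_append, List.length_append] at h1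
            rw [List.take_of_length_le (by omega), List.take_of_length_le (by omega)] at h1
            rw [show X.length + (pforest ws).length + (m - (X.length + (pforest ws').length)) -
                (X.length + (pforest ws).length) = m - (X.length + (pforest ws').length) by omega] at h1
            rw [bal_pforest ws] at h1
            rw [bal_pforest ws']
            omega
    · omega
    · refine common i₂ j₂ (cpS2 F G k i₁ j₁ i₂ j₂) hseq2 (by omega) (by omega)
        (by omega) (by omega) ?_ ?_
      · rw [hto]; simp only [pshift]; rw [if_neg (by omega)]
      · rw [htc]; simp only [pshift]; rw [if_neg (by omega)]

end Dev10
section Dev11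
variable {α : Type}

attribute [local instance] Classical.propDecidable

theorem keep_lt {F G : List (LTree α)} {k : ℕ} {pieces : List Piece} {p : ℕ}
    (h : KeepPos F G k pieces p) : p < (pforest F).length := by
  obtain ⟨o, c, ⟨hmem, _⟩, hor⟩ := h
  have := fnodes_bounds F _ hmem
  simp only at this
  rcases hor with rfl | rfl <;> omega

theorem keep_closure {F G : List (LTree α)} {k : ℕ} {pieces : List Piece} {o c : ℕ}
    (hmem : (o, c) ∈ fnodes F) (h : KeepPos F G k pieces o ∨ KeepPos F G k pieces c) :
    KeepP F G k pieces o c := by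
  rcases h with h | h <;>
  · obtain ⟨o', c', hkp, hor⟩ := h
    have heq : (o', c') = (o, c) := by
      apply nodes_eq hkp.1 hmem
      simp only
      rcases hor with rfl | rfl
      · tauto
      · tauto
    injection heq with e1 e2
    subst e1; subst e2
    exact hkp

theorem keep_char {F G : List (LTree α)} {k : ℕ} {pieces : List Piece}
    (hval : ∀ π ∈ pieces, ValidPiece F π) (hdisj : PDisj pieces) {p : ℕ}
    (hp : KeepPos F G k pieces p) :
    (pforest G)[tgtF F G k pieces p]? = (pforest F)[p]? := by
  obtain ⟨π, hπ, hm, hip⟩ := keep_margin hp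
  rw [tgtF, covP_eq hdisj hπ (inmargin_covers hip)]
  cases π with
  | fpiece i j =>
    obtain ⟨hv1, hv2, _⟩ := hval _ hπ
    obtain ⟨_, hbd, hseq⟩ := fpS_spec hm
    simp only [InMargin] at hip
    simp only [pshift]
    exact seg_char hseq hv2 (by omega) (by omega)
  | cpiece i₁ j₁ i₂ j₂ =>
    obtain ⟨hv1, hv2, hv3, hv4, _, _⟩ := hval _ hπ
    obtain ⟨_, _, _, hbd, hseq1, hseq2, _⟩ := cpS_spec hm
    simp only [InMargin] at hip
    simp only [pshift]
    rcases hip with hip | hip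
    · rw [if_pos (by omega)]
      exact seg_char hseq1 (by omega) (by omega) (by omega)
    · rw [if_neg (by omega)]
      exact seg_char hseq2 (by omega) (by omega) (by omega)

/-- Partner of a position in the node pairing. -/
noncomputable def prt (F : List (LTree α)) (x : ℕ) : ℕ :=
  if h : ∃ q, q ∈ fnodes F ∧ (x = q.1 ∨ x = q.2) then
    (if x = (Classical.choose h).1 then (Classical.choose h).2 else (Classical.choose h).1)
  else 0

theorem prt_spec {F : List (LTree α)} {o c : ℕ} (h : (o, c) ∈ fnodes F) :
    prt F o = c ∧ prt F c = o := by
  have hb := fnodes_bounds F _ h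
  simp only at hb
  constructor
  · have hex : ∃ q, q ∈ fnodes F ∧ (o = q.1 ∨ o = q.2) := ⟨(o, c), h, Or.inl rfl⟩
    rw [prt, dif_pos hex]
    obtain ⟨hq, hor⟩ := Classical.choose_spec hex
    have heq : Classical.choose hex = (o, c) := by
      apply nodes_eq hq h
      tauto
    rw [heq]
    simp
  · have hex : ∃ q, q ∈ fnodes F ∧ (c = q.1 ∨ c = q.2) := ⟨(o, c), h, Or.inr rfl⟩
    rw [prt, dif_pos hex]
    obtain ⟨hq, hor⟩ := Classical.choose_spec hex
    have heq : Classical.choose hex = (o, c) := by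
      apply nodes_eq hq h
      tauto
    rw [heq]
    simp only
    rw [if_neg (by omega)]

theorem covers_closed {F : List (LTree α)} {π : Piece} (hv : ValidPiece F π)
    {o c : ℕ} (hmem : (o, c) ∈ fnodes F) : Covers π o ↔ Covers π c := by
  have hbb := fnodes_bounds F _ hmem
  simp only at hbb
  cases π with
  | fpiece i j =>
    obtain ⟨hv1, hv2, ws, hws⟩ := hv
    have hdec : pforest F = (pforest F).take i ++ pforest ws ++ (pforest F).drop j := by
      rw [← hws]; exact seg_decomp _ hv1 hv2
    have hlA : ((pforest F).take i).length = i := by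
      rw [List.length_take]; omega
    have hlW : (pforest ws).length = j - i := by
      rw [← hws, seg_length]; omega
    constructor
    · intro hc
      obtain ⟨hc1, hc2⟩ := hc
      obtain ⟨k1, k2⟩ := nos hdec hmem ⟨by omega, by omega⟩
      exact ⟨by omega, by omega⟩
    · intro hc
      obtain ⟨hc1, hc2⟩ := hc
      obtain ⟨k1, k2⟩ := nos' hdec hmem ⟨by omega, by omega⟩
      exact ⟨by omega, by omega⟩
  | cpiece i₁ j₁ i₂ j₂ =>
    obtain ⟨hv1, hv2, hv3, hv4, ⟨t0, hspan⟩, ⟨ws, hws⟩⟩ := hv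
    have hdec1 : pforest F = (pforest F).take i₁ ++ pforest [t0] ++ (pforest F).drop j₂ := by
      rw [pforest_single, ← hspan]; exact seg_decomp _ (by omega) hv4
    have hdec2 : pforest F = (pforest F).take j₁ ++ pforest ws ++ (pforest F).drop i₂ := by
      rw [← hws]; exact seg_decomp _ (by omega) (by omega)
    have hlA1 : ((pforest F).take i₁).length = i₁ := by rw [List.length_take]; omega
    have hlW1 : (pforest [t0]).length = j₂ - i₁ := by
      rw [pforest_single, ← hspan, seg_length]; omega
    have hlA2 : ((pforest F).take j₁).length = j₁ := by rw [List.length_take]; omega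
    have hlW2 : (pforest ws).length = i₂ - j₁ := by
      rw [← hws, seg_length]; omega
    constructor
    · intro hc
      have hc' : (i₁ ≤ o ∧ o < j₁) ∨ (i₂ ≤ o ∧ o < j₂) := hc
      obtain ⟨k1, k2⟩ := nos hdec1 hmem ⟨by omega, by omega⟩
      have hch : ¬(j₁ ≤ c ∧ c < i₂) := by
        intro hh
        obtain ⟨m1, m2⟩ := nos' hdec2 hmem ⟨by omega, by omega⟩
        omega
      show (i₁ ≤ c ∧ c < j₁) ∨ (i₂ ≤ c ∧ c < j₂)
      omega
    · intro hc
      have hc' : (i₁ ≤ c ∧ c < j₁) ∨ (i₂ ≤ c ∧ c < j₂) := hc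
      obtain ⟨k1, k2⟩ := nos' hdec1 hmem ⟨by omega, by omega⟩
      have hch : ¬(j₁ ≤ o ∧ o < i₂) := by
        intro hh
        obtain ⟨m1, m2⟩ := nos hdec2 hmem ⟨by omega, by omega⟩
        omega
      show (i₁ ≤ o ∧ o < j₁) ∨ (i₂ ≤ o ∧ o < j₂)
      omega

end Dev11
section Dev12
variable {α : Type}

attribute [local instance] Classical.propDecidable

theorem list_filter_range_card (n : ℕ) (p : ℕ → Prop) :
    ((List.range n).filter (fun x => p x)).length = ((Finset.range n).filter (fun x => p x)).card := by
  rfl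

theorem unkept_bound {F G : List (LTree α)} {k : ℕ} {pieces : List Piece}
    (hval : ∀ π ∈ pieces, ValidPiece F π) (hdisj : PDisj pieces)
    (hsm : ∀ π ∈ pieces, psize π ≤ 4*k ∨ MatchedPiece F G k π)
    (hcov : ∀ p, p < (pforest F).length → ∃ π ∈ pieces, Covers π p) :
    ((List.range (pforest F).length).filter
      (fun p => ¬ KeepPos F G k pieces p)).length ≤ 16 * k * pieces.length := by
  set n := (pforest F).length with hn
  suffices hs : ((Finset.range n).filter (fun p => ¬ KeepPos F G k pieces p)).card ≤
      16 * k * pieces.length by exact hs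
  set Bad : Piece → Finset ℕ := fun π => (Finset.range n).filter
    (fun x => Covers π x ∧ (¬ MatchedPiece F G k π ∨ ¬ InMargin k π x)) with hBad
  set BadC : Piece → Finset ℕ := fun π => (Finset.range n).filter
    (fun x => ∃ o c, (o, c) ∈ fnodes F ∧ ((x = o ∧ c ∈ Bad π) ∨ (x = c ∧ o ∈ Bad π))) with hBadC
  have hBadCard : ∀ π ∈ pieces, (Bad π).card ≤ 8 * k := by
    intro π hπ
    cases π with
    | fpiece i j =>
      rcases hsm _ hπ with hsmall | hmat
      · have hsub : Bad (.fpiece i j) ⊆ Finset.Ico i j := by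
          intro x hx
          simp only [hBad, Finset.mem_filter, Finset.mem_range] at hx
          obtain ⟨_, ⟨h1, h2⟩, _⟩ := hx
          exact Finset.mem_Ico.mpr ⟨h1, h2⟩
        calc (Bad (.fpiece i j)).card ≤ (Finset.Ico i j).card := Finset.card_le_card hsub
          _ = j - i := Nat.card_Ico i j
          _ ≤ 8 * k := by simp only [psize] at hsmall; omega
      · have hsub : Bad (.fpiece i j) ⊆ Finset.Ico i (i + 2*k) ∪ Finset.Ico (j - 2*k) j := by
          intro x hx
          simp only [hBad, Finset.mem_filter, Finset.mem_range] at hx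
          obtain ⟨_, ⟨h1, h2⟩, hor⟩ := hx
          rcases hor with hm | hm
          · exact absurd hmat hm
          · simp only [InMargin] at hm
            rw [Finset.mem_union, Finset.mem_Ico, Finset.mem_Ico]
            omega
        calc (Bad (.fpiece i j)).card ≤ _ := Finset.card_le_card hsub
          _ ≤ (Finset.Ico i (i + 2*k)).card + (Finset.Ico (j - 2*k) j).card := Finset.card_union_le _ _
          _ ≤ 8 * k := by rw [Nat.card_Ico, Nat.card_Ico]; omega
    | cpiece i₁ j₁ i₂ j₂ =>
      rcases hsm _ hπ with hsmall | hmat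
      · have hsub : Bad (.cpiece i₁ j₁ i₂ j₂) ⊆ Finset.Ico i₁ j₁ ∪ Finset.Ico i₂ j₂ := by
          intro x hx
          simp only [hBad, Finset.mem_filter, Finset.mem_range] at hx
          obtain ⟨_, hcv, _⟩ := hx
          rw [Finset.mem_union, Finset.mem_Ico, Finset.mem_Ico]
          rcases hcv with h | h
          · exact Or.inl h
          · exact Or.inr h
        calc (Bad (.cpiece i₁ j₁ i₂ j₂)).card ≤ _ := Finset.card_le_card hsub
          _ ≤ (Finset.Ico i₁ j₁).card + (Finset.Ico i₂ j₂).card := Finset.card_union_le _ _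
          _ ≤ 8 * k := by
              rw [Nat.card_Ico, Nat.card_Ico]
              simp only [psize] at hsmall
              omega
      · have hsub : Bad (.cpiece i₁ j₁ i₂ j₂) ⊆
            (Finset.Ico i₁ (i₁ + 2*k) ∪ Finset.Ico (j₁ - 2*k) j₁) ∪
            (Finset.Ico i₂ (i₂ + 2*k) ∪ Finset.Ico (j₂ - 2*k) j₂) := by
          intro x hx
          simp only [hBad, Finset.mem_filter, Finset.mem_range] at hx
          obtain ⟨_, hcv, hor⟩ := hx
          rcases hor with hm | hm
          · exact absurd hmat hm
          · simp only [InMargin, not_or] at hm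
            simp only [Finset.mem_union, Finset.mem_Ico]
            rcases hcv with h | h
            · have := hm.1; omega
            · have := hm.2; omega
        calc (Bad (.cpiece i₁ j₁ i₂ j₂)).card ≤ _ := Finset.card_le_card hsub
          _ ≤ _ + _ := Finset.card_union_le _ _
          _ ≤ ((Finset.Ico i₁ (i₁ + 2*k)).card + (Finset.Ico (j₁ - 2*k) j₁).card) +
              ((Finset.Ico i₂ (i₂ + 2*k)).card + (Finset.Ico (j₂ - 2*k) j₂).card) :=
            Nat.add_le_add (Finset.card_union_le _ _) (Finset.card_union_le _ _)
          _ ≤ 8 * k := by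
              rw [Nat.card_Ico, Nat.card_Ico, Nat.card_Ico, Nat.card_Ico]
              omega
  have hBadCCard : ∀ π ∈ pieces, (BadC π).card ≤ 8 * k := by
    intro π hπ
    refine le_trans (Finset.card_le_card_of_injOn (prt F) ?_ ?_) (hBadCard π hπ)
    · intro x hx
      simp only [hBadC, Finset.mem_coe, Finset.mem_filter] at hx
      obtain ⟨_, o, c, hmem, hor⟩ := hx
      rcases hor with ⟨rfl, hb⟩ | ⟨rfl, hb⟩
      · rw [(prt_spec hmem).1]; exact hb
      · rw [(prt_spec hmem).2]; exact hb
    · intro x1 hx1 x2 hx2 heq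
      simp only [hBadC, Finset.coe_filter, Set.mem_setOf_eq] at hx1 hx2
      obtain ⟨_, o1, c1, hm1, hor1⟩ := hx1
      obtain ⟨_, o2, c2, hm2, hor2⟩ := hx2
      have hb1 := fnodes_bounds F _ hm1
      have hb2 := fnodes_bounds F _ hm2
      simp only at hb1 hb2
      rcases hor1 with ⟨he1, _⟩ | ⟨he1, _⟩ <;> rcases hor2 with ⟨he2, _⟩ | ⟨he2, _⟩ <;>
        subst he1 <;> subst he2
      · rw [(prt_spec hm1).1, (prt_spec hm2).1] at heq
        subst heq
        exact congrArg Prod.fst (nodes_eq hm1 hm2 (by simp))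
      · rw [(prt_spec hm1).1, (prt_spec hm2).2] at heq
        have h12 := nodes_eq hm1 hm2 (by simp [heq])
        have e1 := congrArg Prod.fst h12
        have e2 := congrArg Prod.snd h12
        simp only at e1 e2
        omega
      · rw [(prt_spec hm1).2, (prt_spec hm2).1] at heq
        have h12 := nodes_eq hm1 hm2 (by simp [heq])
        have e1 := congrArg Prod.fst h12
        have e2 := congrArg Prod.snd h12
        simp only at e1 e2
        omega
      · rw [(prt_spec hm1).2, (prt_spec hm2).2] at heq
        subst heq
        exact congrArg Prod.snd (nodes_eq hm1 hm2 (by simp))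
  have hsub : (Finset.range n).filter (fun p => ¬ KeepPos F G k pieces p) ⊆
      pieces.toFinset.biUnion (fun π => Bad π ∪ BadC π) := by
    intro p hp
    rw [Finset.mem_filter, Finset.mem_range] at hp
    obtain ⟨hpn, hnk⟩ := hp
    obtain ⟨π, hπ, hcovπ⟩ := hcov p hpn
    rw [Finset.mem_biUnion]
    refine ⟨π, List.mem_toFinset.mpr hπ, ?_⟩
    rw [Finset.mem_union]
    by_cases hmat : MatchedPiece F G k π
    · by_cases hmar : InMargin k π p
      · right
        obtain ⟨q, hq, hor⟩ := fnodes_cover F p hpn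
        obtain ⟨o, c⟩ := q
        have hbq := fnodes_bounds F _ hq
        simp only at hbq hor
        simp only [hBadC, Finset.mem_filter, Finset.mem_range]
        refine ⟨hpn, o, c, hq, ?_⟩
        rcases hor with he | he
        · left
          refine ⟨he, ?_⟩
          have hcovc : Covers π c := (covers_closed (hval π hπ) hq).mp (he ▸ hcovπ)
          have hmarc : ¬ InMargin k π c := by
            intro hmc
            exact hnk ⟨o, c, ⟨hq, π, hπ, hmat, he ▸ hmar, hmc⟩, Or.inl he⟩
          simp only [hBad, Finset.mem_filter, Finset.mem_range]
          exact ⟨by omega, hcovc, Or.inr hmarc⟩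
        · right
          refine ⟨he, ?_⟩
          have hcovo : Covers π o := (covers_closed (hval π hπ) hq).mpr (he ▸ hcovπ)
          have hmaro : ¬ InMargin k π o := by
            intro hmo
            exact hnk ⟨o, c, ⟨hq, π, hπ, hmat, hmo, he ▸ hmar⟩, Or.inr he⟩
          simp only [hBad, Finset.mem_filter, Finset.mem_range]
          exact ⟨by omega, hcovo, Or.inr hmaro⟩
      · left
        simp only [hBad, Finset.mem_filter, Finset.mem_range]
        exact ⟨hpn, hcovπ, Or.inr hmar⟩
    · left
      simp only [hBad, Finset.mem_filter, Finset.mem_range]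
      exact ⟨hpn, hcovπ, Or.inl hmat⟩
  calc ((Finset.range n).filter (fun p => ¬ KeepPos F G k pieces p)).card
      ≤ (pieces.toFinset.biUnion (fun π => Bad π ∪ BadC π)).card := Finset.card_le_card hsub
    _ ≤ ∑ π ∈ pieces.toFinset, (Bad π ∪ BadC π).card := Finset.card_biUnion_le
    _ ≤ ∑ π ∈ pieces.toFinset, 16 * k := by
        apply Finset.sum_le_sum
        intro π hπ
        have hπ' := List.mem_toFinset.mp hπ
        calc (Bad π ∪ BadC π).card ≤ (Bad π).card + (BadC π).card := Finset.card_union_le _ _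
          _ ≤ 16 * k := by
              have := hBadCard π hπ'
              have := hBadCCard π hπ'
              omega
    _ = pieces.toFinset.card * (16 * k) := by rw [Finset.sum_const, smul_eq_mul]
    _ ≤ pieces.length * (16 * k) := by
        have := pieces.toFinset_card_le
        exact Nat.mul_le_mul_right _ this
    _ = 16 * k * pieces.length := by ring

end Dev12
section Dev13
variable {α : Type}

attribute [local instance] Classical.propDecidable

theorem tgt_lt {F G : List (LTree α)} {k : ℕ} {pieces : List Piece}
    (hval : ∀ π ∈ pieces, ValidPiece F π)
    (hdisj : PDisj pieces) {p : ℕ} (hp : KeepPos F G k pieces p) :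
    tgtF F G k pieces p < (pforest G).length := by
  obtain ⟨π, hπ, hm, hip⟩ := keep_margin hp
  rw [tgtF, covP_eq hdisj hπ (inmargin_covers hip)]
  cases π with
  | fpiece i j =>
    obtain ⟨_, hbd, _⟩ := fpS_spec hm
    simp only [InMargin] at hip
    simp only [pshift]
    omega
  | cpiece i₁ j₁ i₂ j₂ =>
    obtain ⟨hv1, hv2, hv3, hv4, _, _⟩ := hval _ hπ
    obtain ⟨_, _, hord, hbd, _, _, _⟩ := cpS_spec hm
    simp only [InMargin] at hip
    simp only [pshift]
    rcases hip with hip | hip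
    · rw [if_pos (by omega)]; omega
    · rw [if_neg (by omega)]; omega

theorem keepg_closure {F G : List (LTree α)} {k : ℕ} {pieces : List Piece}
    (hval : ∀ π ∈ pieces, ValidPiece F π) (hdisj : PDisj pieces)
    {ov cv : ℕ} (hmem : (ov, cv) ∈ fnodes G) :
    (∃ p, KeepPos F G k pieces p ∧ tgtF F G k pieces p = ov) ↔
    (∃ p, KeepPos F G k pieces p ∧ tgtF F G k pieces p = cv) := by
  constructor
  · rintro ⟨p, hp, htp⟩
    obtain ⟨o, c, hkp, hor⟩ := hp
    have himg := keep_node hval hdisj hkp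
    have hkpo : KeepPos F G k pieces o := ⟨o, c, hkp, Or.inl rfl⟩
    have hkpc : KeepPos F G k pieces c := ⟨o, c, hkp, Or.inr rfl⟩
    rcases hor with rfl | rfl
    · -- image node (ov, tgt c) shares open with (ov, cv)
      rw [htp] at himg
      have := nodes_eq himg hmem (Or.inl rfl)
      have e2 := congrArg Prod.snd this
      simp only at e2
      exact ⟨c, hkpc, e2⟩
    · -- tgt p is a close paren of the image node, cannot be the open ov
      rw [htp] at himg
      exact absurd rfl (open_ne_close hmem himg)
  · rintro ⟨p, hp, htp⟩
    obtain ⟨o, c, hkp, hor⟩ := hp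
    have himg := keep_node hval hdisj hkp
    have hkpo : KeepPos F G k pieces o := ⟨o, c, hkp, Or.inl rfl⟩
    rcases hor with rfl | rfl
    · rw [htp] at himg
      exact absurd rfl (open_ne_close himg hmem)
    · rw [htp] at himg
      have := nodes_eq himg hmem (Or.inr (Or.inl rfl))
      have e1 := congrArg Prod.fst this
      simp only at e1
      exact ⟨o, hkpo, e1⟩

end Dev13
/-- If the piece-decomposition matching process on `str(F)` with threshold `k`
produces a complete matching — a collection of pairwise disjoint pieces covering
every position of `str(F)`, at most `2·k·(log₂|F| + 1)` of them, each either small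
(size at most `4k`) or exactly matched in `str(G)` up to an index shift of at most
`k` — then `ted(F,G) = O(k² log |F|)` : indeed, the matched pieces, truncated at
each end, together with deletions for all unmatched positions, form a valid tree
alignment of cost `O(k² log |F|)`. -/
theorem stmt19 :
    ∃ Cst : ℕ, ∀ (α : Type) [DecidableEq α] (k : ℕ) (F G : List (LTree α))
      (pieces : List Piece),
      fsize G ≤ fsize F →
      (∀ π ∈ pieces, ValidPiece F π) →
      List.Pairwise (fun π₁ π₂ => ∀ p, ¬(Covers π₁ p ∧ Covers π₂ p)) pieces →
      (∀ p, p < (pforest F).length → ∃ π ∈ pieces, Covers π p) →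
      pieces.length ≤ 2 * k * (Nat.log 2 (fsize F) + 1) →
      (∀ π ∈ pieces, psize π ≤ 4 * k ∨ MatchedPiece F G k π) →
      ted F G ≤ Cst * k ^ 2 * (Nat.log 2 (fsize F) + 1) ∧
        ∀ d : Bool × α, ∃ M, TreeAligned F G M ∧
          alignCost (pforest F) (pforest G) d M ≤
            Cst * k ^ 2 * (Nat.log 2 (fsize F) + 1) := by
  classical
  refine ⟨100, ?_⟩
  intro α _ k F G pieces hFG hval hdisjL hcov hnum hsm
  have hdisj : PDisj pieces := hdisjL
  have hnGn : (pforest G).length ≤ (pforest F).length := by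
    rw [len_pforest, len_pforest]; omega
  -- the kept positions and the matching
  set keptF : List ℕ :=
    (List.range (pforest F).length).filter (fun p => KeepPos F G k pieces p) with hkept
  set M : List (ℕ × ℕ) := keptF.map (fun p => (p, tgtF F G k pieces p)) with hM
  have hmemk : ∀ p, p ∈ keptF ↔ (p < (pforest F).length ∧ KeepPos F G k pieces p) := by
    intro p
    rw [hkept, List.mem_filter, List.mem_range]
    simp
  have hkr : keptF.Pairwise (· < ·) :=
    List.Pairwise.sublist List.filter_sublist List.pairwise_lt_range
  have hpairM : keptF.Pairwise
      (fun a b => a < b ∧ tgtF F G k pieces a < tgtF F G k pieces b) := by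
    refine List.Pairwise.imp_of_mem ?_ hkr
    intro a b ha hb hab
    exact ⟨hab, tgt_mono hval hdisj ((hmemk a).1 ha).2 ((hmemk b).1 hb).2 hab⟩
  have hIsM : IsMatching M := by
    rw [IsMatching, hM]
    show List.IsChain _ _
    rw [List.isChain_map]
    exact hpairM.isChain
  have hIB : InBounds (pforest F) (pforest G) M := by
    intro q hq
    rw [hM, List.mem_map] at hq
    obtain ⟨p, hp, rfl⟩ := hq
    obtain ⟨h1, h2⟩ := (hmemk p).1 hp
    exact ⟨h1, tgt_lt hval hdisj h2⟩
  have hTA3 : ∀ a ou cu, fpos F a = some (ou, cu) →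
      ((∀ q ∈ M, q.1 ≠ ou ∧ q.1 ≠ cu) ∨
        ∃ b ov cv, fpos G b = some (ov, cv) ∧ (ou, ov) ∈ M ∧ (cu, cv) ∈ M) := by
    intro a ou cu hfp
    have hmem : (ou, cu) ∈ fnodes F := fpos_mem F a _ hfp
    have hb := fnodes_bounds F _ hmem
    simp only at hb
    by_cases hkp : KeepP F G k pieces ou cu
    · right
      have himg := keep_node hval hdisj hkp
      obtain ⟨b, hbpos⟩ := fnodes_pos G _ himg
      refine ⟨b, tgtF F G k pieces ou, tgtF F G k pieces cu, hbpos, ?_, ?_⟩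
      · rw [hM, List.mem_map]
        exact ⟨ou, (hmemk ou).2 ⟨by omega, ⟨ou, cu, hkp, Or.inl rfl⟩⟩, rfl⟩
      · rw [hM, List.mem_map]
        exact ⟨cu, (hmemk cu).2 ⟨by omega, ⟨ou, cu, hkp, Or.inr rfl⟩⟩, rfl⟩
    · left
      intro q hq
      rw [hM, List.mem_map] at hq
      obtain ⟨p, hp, rfl⟩ := hq
      have hkpp := ((hmemk p).1 hp).2
      constructor
      · intro he
        exact hkp (keep_closure hmem (Or.inl (he ▸ hkpp)))
      · intro he
        exact hkp (keep_closure hmem (Or.inr (he ▸ hkpp)))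
  -- size counting
  have hcount := count_split (List.range (pforest F).length) (fun p => KeepPos F G k pieces p)
  simp only [List.length_range] at hcount
  have hunkept := unkept_bound hval hdisj hsm hcov
  rw [← hkept] at hcount
  have hPB : 16 * k * pieces.length ≤ 32 * (k^2 * (Nat.log 2 (fsize F) + 1)) := by
    calc 16 * k * pieces.length ≤ 16 * k * (2 * k * (Nat.log 2 (fsize F) + 1)) :=
          Nat.mul_le_mul_left _ hnum
      _ = 32 * (k^2 * (Nat.log 2 (fsize F) + 1)) := by ring
  have hkFlen : keptF.length + 16 * k * pieces.length ≥ (pforest F).length := by omega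
  -- the two restriction scripts
  have hclF : ∀ q ∈ fnodes F,
      ((fun p => KeepPos F G k pieces p) (0 + q.1) ↔ (fun p => KeepPos F G k pieces p) (0 + q.2)) := by
    intro q hq
    obtain ⟨o, c⟩ := q
    simp only [zero_add]
    constructor
    · intro h
      exact ⟨o, c, keep_closure hq (Or.inl h), Or.inr rfl⟩
    · intro h
      exact ⟨o, c, keep_closure hq (Or.inr h), Or.inl rfl⟩
  have hclG : ∀ q ∈ fnodes G,
      ((fun v => ∃ p, KeepPos F G k pieces p ∧ tgtF F G k pieces p = v) (0 + q.1) ↔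
       (fun v => ∃ p, KeepPos F G k pieces p ∧ tgtF F G k pieces p = v) (0 + q.2)) := by
    intro q hq
    obtain ⟨ov, cv⟩ := q
    simp only [zero_add]
    exact keepg_closure hval hdisj hq
  have hmap : (List.range (pforest G).length).filter
      (fun v => ∃ p, KeepPos F G k pieces p ∧ tgtF F G k pieces p = v) =
      keptF.map (fun p => tgtF F G k pieces p) := by
    apply sorted_ext
    · exact List.Pairwise.sublist List.filter_sublist List.pairwise_lt_range
    · rw [List.pairwise_map]
      exact hpairM.imp (fun h => h.2)
    · intro x
      simp only [List.mem_filter, List.mem_range, List.mem_map, decide_eq_true_eq]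
      constructor
      · rintro ⟨_, p, hp, rfl⟩
        exact ⟨p, (hmemk p).2 ⟨keep_lt hp, hp⟩, rfl⟩
      · rintro ⟨p, hp, rfl⟩
        obtain ⟨h1, h2⟩ := (hmemk p).1 hp
        exact ⟨tgt_lt hval hdisj h2, ⟨p, h2, rfl⟩⟩
  have hext : ext (fun p => KeepPos F G k pieces p) (pforest F) 0 =
      ext (fun v => ∃ p, KeepPos F G k pieces p ∧ tgtF F G k pieces p = v) (pforest G) 0 := by
    rw [ext, ext]
    have e1 : (List.range (pforest F).length).filter
        (fun r => (fun p => KeepPos F G k pieces p) (0 + r)) = keptF := by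
      rw [hkept]
      apply List.filter_congr
      intro a _
      simp
    have e2 : (List.range (pforest G).length).filter
        (fun r => (fun v => ∃ p, KeepPos F G k pieces p ∧ tgtF F G k pieces p = v) (0 + r)) =
        keptF.map (fun p => tgtF F G k pieces p) := by
      rw [← hmap]
      apply List.filter_congr
      intro a _
      simp
    rw [e1, e2, List.filterMap_map]
    apply List.filterMap_congr
    intro p hp
    have h2 := ((hmemk p).1 hp).2
    simp only [Function.comp]
    exact (keep_char hval hdisj h2).symm
  have hcoreq : rf (fun p => KeepPos F G k pieces p) F 0 =
      rf (fun v => ∃ p, KeepPos F G k pieces p ∧ tgtF F G k pieces p = v) G 0 := by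
    apply pforest_inj
    rw [rf_str _ F 0 hclF, rf_str _ G 0 hclG, hext]
  have hscript : FEdits
      (dcf (fun p => KeepPos F G k pieces p) F 0 +
        dcf (fun v => ∃ p, KeepPos F G k pieces p ∧ tgtF F G k pieces p = v) G 0) F G := by
    refine FEdits.comp (rf_edits _ F 0) ?_
    rw [hcoreq]
    exact (rf_edits _ G 0).symm'
  -- counting the two scripts
  have hd1 := dcf_count (fun p => KeepPos F G k pieces p) F 0 hclF
  have hd1' : ((List.range (pforest F).length).filter
      (fun r => ¬ (fun p => KeepPos F G k pieces p) (0 + r))).length =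
      ((List.range (pforest F).length).filter (fun p => ¬ KeepPos F G k pieces p)).length := by
    congr 1
    apply List.filter_congr
    intro a _
    simp
  have hd2 := dcf_count (fun v => ∃ p, KeepPos F G k pieces p ∧ tgtF F G k pieces p = v) G 0 hclG
  have hcountG := count_split (List.range (pforest G).length)
    (fun v => ∃ p, KeepPos F G k pieces p ∧ tgtF F G k pieces p = v)
  simp only [List.length_range] at hcountG
  have hd2' : ((List.range (pforest G).length).filter
      (fun r => ¬ (fun v => ∃ p, KeepPos F G k pieces p ∧ tgtF F G k pieces p = v) (0 + r))).length =
      ((List.range (pforest G).length).filter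
        (fun v => ¬ ∃ p, KeepPos F G k pieces p ∧ tgtF F G k pieces p = v)).length := by
    congr 1
    apply List.filter_congr
    intro a _
    simp
  have hglen : ((List.range (pforest G).length).filter
      (fun v => ∃ p, KeepPos F G k pieces p ∧ tgtF F G k pieces p = v)).length = keptF.length := by
    rw [hmap, List.length_map]
  have htedB : ted F G ≤ 100 * k ^ 2 * (Nat.log 2 (fsize F) + 1) := by
    have hle : ted F G ≤
        dcf (fun p => KeepPos F G k pieces p) F 0 +
        dcf (fun v => ∃ p, KeepPos F G k pieces p ∧ tgtF F G k pieces p = v) G 0 :=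
      Nat.sInf_le hscript
    have hfin : 100 * k ^ 2 * (Nat.log 2 (fsize F) + 1) =
        100 * (k^2 * (Nat.log 2 (fsize F) + 1)) := by ring
    rw [hfin]
    beta_reduce at hd1' hd2'
    omega
  refine ⟨htedB, ?_⟩
  intro d
  refine ⟨M, ⟨hIsM, hIB, hTA3⟩, ?_⟩
  have hcost0 : (M.countP fun p =>
      decide ((pforest F).getD p.1 d ≠ (pforest G).getD p.2 d)) = 0 := by
    rw [List.countP_eq_zero]
    intro q hq
    rw [hM, List.mem_map] at hq
    obtain ⟨p, hp, rfl⟩ := hq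
    have h2 := ((hmemk p).1 hp).2
    have hch := keep_char hval hdisj h2
    simp only [decide_eq_true_eq, not_not]
    rw [List.getD_eq_getElem?_getD, List.getD_eq_getElem?_getD]
    rw [hch]
  have hMlen : M.length = keptF.length := by rw [hM, List.length_map]
  rw [alignCost, hcost0, hMlen]
  have hfin : 100 * k ^ 2 * (Nat.log 2 (fsize F) + 1) =
      100 * (k^2 * (Nat.log 2 (fsize F) + 1)) := by ring
  rw [hfin]
  omega
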